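/- arXiv:2006.16142 — 8 statements merged into one kernel-verified Lean document; each statement's English description precedes it below -/
import Mathlib

section
/- Suppose f is L_f-smooth and convex, Ω ⊆ R^n is a polytope with diameter D, Problem min_{x∈Ω} f(x) has a unique solution x⋆ satisfying strict complementarity with gap δ > 0 and quadratic growth with parameter γ > 0, and k ≥ r⋆ (the number of vertices of the smallest face containing x⋆). Then the kFW algorithm finds x⋆ exactly in at most T + 1 iterations, where T = 4 L_f³ D⁴ / (γ δ²). -/
open scoped RealInnerProductSpace

section Aux
variable {E : Type*} [NormedAddCommGroup E] [InnerProductSpace ℝ E] [CompleteSpace E]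


lemma aux_line_deriv {f : E → ℝ} {g : E → E} (hgrad : ∀ a, HasGradientAt f (g a) a)
    (x d : E) (u : ℝ) :
    HasDerivAt (fun u : ℝ => f (x + u • d)) ⟪g (x + u • d), d⟫ u := by
  have hline : HasDerivAt (fun u : ℝ => x + u • d) d u := by
    simpa using ((hasDerivAt_id u).smul_const d).const_add x
  have hf := hasGradientAt_iff_hasFDerivAt.1 (hgrad (x + u • d))
  have := hf.comp_hasDerivAt u hline
  exact this.congr_deriv (by simp [InnerProductSpace.toDual_apply_apply])

lemma aux_grad_ineq {f : E → ℝ} {s : Set E} (hf : ConvexOn ℝ s f) {x y : E}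
    (hx : x ∈ s) (hy : y ∈ s) {gx : E} (hg : HasGradientAt f gx x) :
    f x + ⟪gx, y - x⟫ ≤ f y := by
  set d := y - x with hd
  have hder : HasDerivAt (fun u : ℝ => f (x + u • d)) ⟪gx, d⟫ 0 := by
    have hline : HasDerivAt (fun u : ℝ => x + u • d) d 0 := by
      simpa using ((hasDerivAt_id (0:ℝ)).smul_const d).const_add x
    have hf' := hasGradientAt_iff_hasFDerivAt.1 hg
    have hx0 : x + (0:ℝ) • d = x := by simp
    rw [← hx0] at hf'
    exact (hf'.comp_hasDerivAt 0 hline).congr_deriv (by simp [InnerProductSpace.toDual_apply_apply])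
  have hT : Filter.Tendsto (slope (fun u : ℝ => f (x + u • d)) 0) (nhdsWithin 0 (Set.Ioi 0))
      (nhds ⟪gx, d⟫) :=
    (hasDerivAt_iff_tendsto_slope.1 hder).mono_left
      (nhdsWithin_mono 0 (fun u hu => ne_of_gt hu))
  have hev : ∀ᶠ u in nhdsWithin (0:ℝ) (Set.Ioi 0),
      slope (fun u : ℝ => f (x + u • d)) 0 u ≤ f y - f x := by
    filter_upwards [Ioc_mem_nhdsGT_of_mem (Set.mem_Ico.2 ⟨le_refl (0:ℝ), zero_lt_one⟩)]
      with u hu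
    obtain ⟨hu0, hu1⟩ := hu
    have hcomb : x + u • d = (1 - u) • x + u • y := by
      rw [hd]; module
    have hcvx := hf.2 hx hy (by linarith : (0:ℝ) ≤ 1 - u) hu0.le (by ring)
    rw [slope_def_field]
    have h0 : x + (0:ℝ) • d = x := by simp
    rw [h0, hcomb, sub_zero, div_le_iff₀ hu0]
    have : f ((1 - u) • x + u • y) ≤ (1 - u) * f x + u * f y := by
      simpa [smul_eq_mul] using hcvx
    nlinarith [this]
  have := le_of_tendsto hT hev
  linarith

lemma aux_descent {f : E → ℝ} {g : E → E} {L : ℝ} (hL : 0 ≤ L)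
    (hgrad : ∀ a, HasGradientAt f (g a) a)
    (hlip : ∀ a b, ‖g a - g b‖ ≤ L * ‖a - b‖) (x y : E) :
    f y ≤ f x + ⟪g x, y - x⟫ + L / 2 * ‖y - x‖ ^ 2 := by
  set d := y - x with hd
  set φ : ℝ → ℝ := fun u => f (x + u • d) - u * ⟪g x, d⟫ - L * u ^ 2 / 2 * ‖d‖ ^ 2 with hφ
  have hder : ∀ u : ℝ, HasDerivAt φ
      (⟪g (x + u • d), d⟫ - ⟪g x, d⟫ - L * u * ‖d‖ ^ 2) u := by
    intro u
    have h1 := aux_line_deriv hgrad x d u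
    have h2 : HasDerivAt (fun u : ℝ => u * ⟪g x, d⟫) ⟪g x, d⟫ u := by
      simpa using (hasDerivAt_id u).mul_const ⟪g x, d⟫
    have h3 : HasDerivAt (fun u : ℝ => L * u ^ 2 / 2 * ‖d‖ ^ 2) (L * u * ‖d‖ ^ 2) u := by
      have h := ((hasDerivAt_pow 2 u).const_mul L).mul_const (‖d‖ ^ 2 / 2)
      have heq : (fun u : ℝ => L * u ^ 2 * (‖d‖ ^ 2 / 2)) =
          fun u : ℝ => L * u ^ 2 / 2 * ‖d‖ ^ 2 := by funext v; ring
      rw [heq] at h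
      refine h.congr_deriv ?_
      push_cast
      ring
    have := (h1.sub h2).sub h3
    exact this
  have hcont : Continuous φ := by
    have : Differentiable ℝ φ := fun u => (hder u).differentiableAt
    exact this.continuous
  have hanti : AntitoneOn φ (Set.Icc 0 1) := by
    apply antitoneOn_of_deriv_nonpos (convex_Icc 0 1) hcont.continuousOn
    · intro u _
      exact (hder u).differentiableAt.differentiableWithinAt
    · intro u hu
      rw [interior_Icc] at hu
      rw [(hder u).deriv]
      have hin : ⟪g (x + u • d) - g x, d⟫ ≤ L * u * ‖d‖ ^ 2 := by
        calc ⟪g (x + u • d) - g x, d⟫ ≤ ‖g (x + u • d) - g x‖ * ‖d‖ :=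
              real_inner_le_norm _ _
          _ ≤ (L * ‖(x + u • d) - x‖) * ‖d‖ := by
              apply mul_le_mul_of_nonneg_right (hlip _ _) (norm_nonneg _)
          _ = L * (|u| * ‖d‖) * ‖d‖ := by rw [add_sub_cancel_left, norm_smul]; rfl
          _ = L * u * ‖d‖ ^ 2 := by rw [abs_of_nonneg hu.1.le]; ring
      rw [inner_sub_left] at hin
      linarith
  have h01 := hanti (Set.mem_Icc.2 ⟨le_refl 0, zero_le_one⟩)
    (Set.mem_Icc.2 ⟨zero_le_one, le_refl 1⟩) zero_le_one
  have e0 : φ 0 = f x := by simp [hφ]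
  have e1 : φ 1 = f y - ⟪g x, d⟫ - L / 2 * ‖d‖ ^ 2 := by
    have : x + (1:ℝ) • d = y := by rw [hd]; module
    simp only [hφ, this, one_pow, one_mul]
    ring
  rw [e0, e1] at h01
  linarith

lemma aux_hull_inner {gx : E} {c : ℝ} {V : Set E} (h : ∀ u ∈ V, c ≤ ⟪gx, u⟫) :
    ∀ y ∈ convexHull ℝ V, c ≤ ⟪gx, y⟫ := by
  intro y hy
  have hcvx : Convex ℝ { w : E | c ≤ ⟪gx, w⟫ } :=
    convex_halfSpace_ge ⟨fun a b => inner_add_right _ _ _,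
      fun r a => by rw [real_inner_smul_right]; rfl⟩ c
  exact convexHull_min h hcvx hy

end Aux

set_option maxHeartbeats 1600000 in
/-- kFW on a polytope: under strict complementarity (gap `δ > 0`), quadratic
growth (parameter `γ`), `L`-smoothness and convexity of `f`, and `k ≥ r⋆` (the
number of vertices of the smallest face `Fv` of `Ω = conv(Vtx)` containing the
unique solution `xs`), the kFW algorithm finds `xs` exactly within
`T + 1 = 4 L³ D⁴ / (γ δ²) + 1` iterations. -/
theorem kFW_finite_convergence_polytope {n : ℕ}
    (f : EuclideanSpace ℝ (Fin n) → ℝ)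
    (g : EuclideanSpace ℝ (Fin n) → EuclideanSpace ℝ (Fin n))
    (Vtx Fv : Finset (EuclideanSpace ℝ (Fin n)))
    (L D γ δ : ℝ) (k : ℕ)
    (hL : 0 < L) (hD : 0 < D) (hγ : 0 < γ) (hδ : 0 < δ)
    (hFsub : Fv ⊆ Vtx)
    -- the constraint set is the polytope `Ω = conv(Vtx)` with diameter `D`
    (hdiam : ∀ x ∈ convexHull ℝ (Vtx : Set (EuclideanSpace ℝ (Fin n))),
      ∀ y ∈ convexHull ℝ (Vtx : Set (EuclideanSpace ℝ (Fin n))), ‖x - y‖ ≤ D)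
    -- `f` is convex and `L`-smooth
    (hconv : ConvexOn ℝ (convexHull ℝ (Vtx : Set (EuclideanSpace ℝ (Fin n)))) f)
    (hgrad : ∀ x, HasGradientAt f (g x) x)
    (hlip : ∀ x y, ‖g x - g y‖ ≤ L * ‖x - y‖)
    -- `xs` is the unique solution, lying in the face spanned by `Fv`
    (xs : EuclideanSpace ℝ (Fin n))
    (hxsF : xs ∈ convexHull ℝ (Fv : Set (EuclideanSpace ℝ (Fin n))))
    (hmin : ∀ y ∈ convexHull ℝ (Vtx : Set (EuclideanSpace ℝ (Fin n))), f xs ≤ f y)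
    (huniq : ∀ y ∈ convexHull ℝ (Vtx : Set (EuclideanSpace ℝ (Fin n))), f y = f xs → y = xs)
    -- optimality on the face and strict complementarity gap `δ`
    (hopt : ∀ v ∈ Fv, ⟪g xs, v⟫ = ⟪g xs, xs⟫)
    (hgap : ∀ u ∈ Vtx, u ∉ Fv → δ ≤ ⟪g xs, u⟫ - ⟪g xs, xs⟫)
    -- quadratic growth
    (hQG : ∀ x ∈ convexHull ℝ (Vtx : Set (EuclideanSpace ℝ (Fin n))),
      γ * ‖x - xs‖ ^ 2 ≤ f x - f xs)
    -- `k ≥ r⋆`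
    (hk : Fv.card ≤ k) (hkV : k ≤ Vtx.card)
    -- the kFW iterates: kLOO picks the `k` vertices with smallest inner product
    -- with the gradient, and kDS minimizes over their convex hull with `x t`
    (x : ℕ → EuclideanSpace ℝ (Fin n))
    (hxΩ : ∀ t, x t ∈ convexHull ℝ (Vtx : Set (EuclideanSpace ℝ (Fin n))))
    (hstep : ∀ t : ℕ, ∃ S : Finset (EuclideanSpace ℝ (Fin n)), S ⊆ Vtx ∧ S.card = k ∧
      (∀ v ∈ S, ∀ u ∈ Vtx, u ∉ S → ⟪g (x t), v⟫ ≤ ⟪g (x t), u⟫) ∧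
      x (t + 1) ∈ convexHull ℝ (insert (x t) (S : Set (EuclideanSpace ℝ (Fin n)))) ∧
      ∀ y ∈ convexHull ℝ (insert (x t) (S : Set (EuclideanSpace ℝ (Fin n)))),
        f (x (t + 1)) ≤ f y) :
    ∀ t : ℕ, 4 * L ^ 3 * D ^ 4 / (γ * δ ^ 2) + 1 ≤ (t : ℝ) → x t = xs := by
  classical
  have hVsub : (Vtx : Set (EuclideanSpace ℝ (Fin n))) ⊆
      convexHull ℝ (Vtx : Set (EuclideanSpace ℝ (Fin n))) := subset_convexHull ℝ _
  have hxsΩ : xs ∈ convexHull ℝ (Vtx : Set (EuclideanSpace ℝ (Fin n))) :=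
    convexHull_mono (Finset.coe_subset.2 hFsub) hxsF
  set C := L * D ^ 2 with hC
  have hC0 : 0 < C := by positivity
  have hnn : ∀ t, 0 ≤ f (x t) - f xs := fun t => sub_nonneg.2 (hmin _ (hxΩ t))
  -- nonempty face
  have hFne : Fv.Nonempty := by
    rcases Fv.eq_empty_or_nonempty with h | h
    · rw [h] at hxsF; simp at hxsF
    · exact h
  have hk1 : 1 ≤ k := le_trans (Finset.card_pos.2 hFne) hk
  -- per-step inequality
  have core : ∀ t : ℕ, ∀ η : ℝ, 0 ≤ η → η ≤ 1 →
      f (x (t + 1)) - f xs ≤ (f (x t) - f xs) - η * (f (x t) - f xs) + η ^ 2 * C / 2 := by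
    intro t η h0 h1
    obtain ⟨S, hSV, hScard, hLOO, hxmem, hxopt⟩ := hstep t
    have hSne : S.Nonempty := Finset.card_pos.1 (by omega)
    obtain ⟨v, hvS, hvmin⟩ := S.exists_min_image (fun u => ⟪g (x t), u⟫) hSne
    have hvV : v ∈ Vtx := hSV hvS
    have hvall : ∀ u ∈ (Vtx : Set (EuclideanSpace ℝ (Fin n))),
        ⟪g (x t), v⟫ ≤ ⟪g (x t), u⟫ := by
      intro u hu
      rw [Finset.mem_coe] at hu
      by_cases huS : u ∈ S
      · exact hvmin u huS
      · exact hLOO v hvS u hu huS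
    have hvxs : ⟪g (x t), v⟫ ≤ ⟪g (x t), xs⟫ := aux_hull_inner hvall xs hxsΩ
    have hyη : x t + η • (v - x t) ∈
        convexHull ℝ (insert (x t) (S : Set (EuclideanSpace ℝ (Fin n)))) := by
      have hxm : x t ∈ convexHull ℝ (insert (x t) (S : Set (EuclideanSpace ℝ (Fin n)))) :=
        subset_convexHull ℝ _ (Set.mem_insert _ _)
      have hvm : v ∈ convexHull ℝ (insert (x t) (S : Set (EuclideanSpace ℝ (Fin n)))) :=
        subset_convexHull ℝ _ (Set.mem_insert_of_mem _ (Finset.mem_coe.2 hvS))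
      have hcomb := (convex_convexHull ℝ _) hxm hvm (by linarith : (0:ℝ) ≤ 1 - η) h0
        (by ring : (1 - η) + η = 1)
      convert hcomb using 1
      module
    have h1' := hxopt _ hyη
    have hds := aux_descent hL.le hgrad hlip (x t) (x t + η • (v - x t))
    have hy' : (x t + η • (v - x t)) - x t = η • (v - x t) := by abel
    rw [hy', real_inner_smul_right] at hds
    have hns : ‖η • (v - x t)‖ ^ 2 = η ^ 2 * ‖v - x t‖ ^ 2 := by
      rw [norm_smul, Real.norm_eq_abs, mul_pow, sq_abs]
    rw [hns] at hds
    have hgi := aux_grad_ineq hconv (hxΩ t) hxsΩ (hgrad (x t))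
    have hB : ⟪g (x t), v - x t⟫ ≤ f xs - f (x t) := by
      rw [inner_sub_right] at hgi ⊢
      linarith
    have hB' : η * ⟪g (x t), v - x t⟫ ≤ η * (f xs - f (x t)) :=
      mul_le_mul_of_nonneg_left hB h0
    have hnorm : ‖v - x t‖ ≤ D := hdiam _ (hVsub hvV) _ (hxΩ t)
    have hC' : L / 2 * (η ^ 2 * ‖v - x t‖ ^ 2) ≤ η ^ 2 * C / 2 := by
      rw [hC]
      have hsq : ‖v - x t‖ ^ 2 ≤ D ^ 2 := pow_le_pow_left₀ (norm_nonneg _) hnorm 2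
      have hmm := mul_le_mul_of_nonneg_left hsq (by positivity : (0:ℝ) ≤ L / 2 * η ^ 2)
      linarith [hmm]
    linarith
  -- the standard Frank–Wolfe rate
  have rate : ∀ t : ℕ, 1 ≤ t → f (x t) - f xs ≤ 2 * C / ((t : ℝ) + 1) := by
    intro t ht
    induction t with
    | zero => omega
    | succ s ih =>
      rcases Nat.eq_zero_or_pos s with hs | hs
      · subst hs
        have hbound : f (x (0 + 1)) - f xs ≤ C := by
          rcases le_or_gt (f (x 0) - f xs) C with hle | hlt
          · have hcore := core 0 ((f (x 0) - f xs) / C) (div_nonneg (hnn 0) hC0.le)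
              ((div_le_one hC0).2 hle)
            have e3 : f (x 0) - f xs - (f (x 0) - f xs) / C * (f (x 0) - f xs) +
                ((f (x 0) - f xs) / C) ^ 2 * C / 2
                = (f (x 0) - f xs) - (f (x 0) - f xs) ^ 2 / (2 * C) := by
              field_simp
              ring
            rw [e3] at hcore
            have hpos : 0 ≤ (f (x 0) - f xs) ^ 2 / (2 * C) := by positivity
            linarith
          · have hcore := core 0 1 zero_le_one le_rfl
            linarith
        have h2C : 2 * C / ((0:ℝ) + 1 + 1) = C := by ring
        push_cast
        linarith [hbound, h2C]
      · have hs1 : 1 ≤ s := hs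
        have ihs := ih hs1
        have hsr : (1 : ℝ) ≤ (s : ℝ) := by exact_mod_cast hs1
        have hsC : 2 * C / ((s : ℝ) + 1) ≤ C := by
          rw [div_le_iff₀ (by linarith)]
          nlinarith
        have hhs := le_trans ihs hsC
        have hcore := core s ((f (x s) - f xs) / C) (div_nonneg (hnn s) hC0.le)
          ((div_le_one hC0).2 hhs)
        set h := f (x s) - f xs with hh
        have h1 : h * ((s : ℝ) + 1) ≤ 2 * C := by
          rw [← le_div_iff₀ (by linarith : (0:ℝ) < (s:ℝ) + 1)]
          exact ihs
        have e1 : h - (h / C) * h + (h / C) ^ 2 * C / 2 = (2 * C * h - h ^ 2) / (2 * C) := by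
          field_simp
          ring
        rw [e1] at hcore
        have e2 : (2 * C * h - h ^ 2) / (2 * C) ≤ 2 * C / ((s : ℝ) + 2) := by
          rw [div_le_div_iff₀ (by linarith) (by linarith)]
          nlinarith [sq_nonneg h, sq_nonneg (2 * C - h * ((s : ℝ) + 1)),
            mul_nonneg (mul_nonneg (sub_nonneg.2 h1) (hnn s)) (by linarith : (0:ℝ) ≤ (s:ℝ))]
        have : ((s : ℕ) + 1 : ℕ) = s + 1 := rfl
        push_cast
        calc f (x (s + 1)) - f xs ≤ (2 * C * h - h ^ 2) / (2 * C) := hcore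
          _ ≤ 2 * C / ((s : ℝ) + 2) := e2
          _ = 2 * C / ((s : ℝ) + 1 + 1) := by ring_nf
  -- final argument
  intro t htT
  have hA0 : 0 < 4 * L ^ 3 * D ^ 4 / (γ * δ ^ 2) := by positivity
  have ht1 : 1 ≤ t := by
    have : (1 : ℝ) ≤ (t : ℝ) := by linarith
    exact_mod_cast this
  obtain ⟨s, rfl⟩ : ∃ s, t = s + 1 := ⟨t - 1, by omega⟩
  have hcast : ((s + 1 : ℕ) : ℝ) = (s : ℝ) + 1 := by push_cast; ring
  rw [hcast] at htT
  have hsA : 4 * L ^ 3 * D ^ 4 / (γ * δ ^ 2) ≤ (s : ℝ) := by linarith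
  have hs1 : 1 ≤ s := by
    have : (0 : ℝ) < (s : ℝ) := lt_of_lt_of_le hA0 hsA
    exact_mod_cast Nat.cast_pos.1 this
  have hsr : (1 : ℝ) ≤ (s : ℝ) := by exact_mod_cast hs1
  have hrate := rate s hs1
  -- x s is close to xs
  have hclose : ‖x s - xs‖ < δ / (L * D) := by
    have hq := hQG (x s) (hxΩ s)
    have hlt : 2 * C / ((s : ℝ) + 1) < γ * δ ^ 2 / (L ^ 2 * D ^ 2) := by
      rw [div_lt_div_iff₀ (by linarith) (by positivity)]
      have hmul : 4 * L ^ 3 * D ^ 4 ≤ γ * δ ^ 2 * (s : ℝ) := by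
        rw [div_le_iff₀ (by positivity : (0:ℝ) < γ * δ ^ 2)] at hsA
        linarith
      have hLD : (0 : ℝ) < L ^ 3 * D ^ 4 := by positivity
      have hgd : (0 : ℝ) < γ * δ ^ 2 := by positivity
      rw [hC]
      linarith
    have h2 : γ * ‖x s - xs‖ ^ 2 < γ * (δ ^ 2 / (L ^ 2 * D ^ 2)) := by
      have : γ * δ ^ 2 / (L ^ 2 * D ^ 2) = γ * (δ ^ 2 / (L ^ 2 * D ^ 2)) := by ring
      rw [← this]
      exact lt_of_le_of_lt (le_trans hq hrate) hlt
    have h3 : ‖x s - xs‖ ^ 2 < δ ^ 2 / (L ^ 2 * D ^ 2) := (mul_lt_mul_iff_right₀ hγ).1 h2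
    have h4 : δ ^ 2 / (L ^ 2 * D ^ 2) = (δ / (L * D)) ^ 2 := by
      rw [div_pow, mul_pow]
    rw [h4] at h3
    exact lt_of_pow_lt_pow_left₀ 2 (by positivity) h3
  -- the face is captured
  obtain ⟨S, hSV, hScard, hLOO, hxmem, hxopt⟩ := hstep s
  have hFS : Fv ⊆ S := by
    intro w hw
    by_contra hwS
    have hex : ∃ u ∈ S, u ∉ Fv := by
      by_contra hno
      push_neg at hno
      have hSF : S ⊆ Fv.erase w := fun u hu =>
        Finset.mem_erase.2 ⟨by rintro rfl; exact hwS hu, hno u hu⟩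
      have hle := Finset.card_le_card hSF
      rw [hScard, Finset.card_erase_of_mem hw] at hle
      omega
    obtain ⟨u, huS, huF⟩ := hex
    have huV : u ∈ Vtx := hSV huS
    have hwV : w ∈ Vtx := hFsub hw
    have h1 := hLOO u huS w hwV hwS
    have h2 := hgap u huV huF
    have h3 := hopt w hw
    have hub : |⟪g (x s) - g xs, u - w⟫| ≤ L * ‖x s - xs‖ * D := by
      calc |⟪g (x s) - g xs, u - w⟫| ≤ ‖g (x s) - g xs‖ * ‖u - w‖ :=
            abs_real_inner_le_norm _ _
        _ ≤ (L * ‖x s - xs‖) * D := by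
            apply mul_le_mul (hlip _ _) (hdiam _ (hVsub huV) _ (hVsub hwV))
              (norm_nonneg _) (by positivity)
        _ = L * ‖x s - xs‖ * D := by ring
    have hLDlt : L * ‖x s - xs‖ * D < δ := by
      rw [lt_div_iff₀ (by positivity : (0:ℝ) < L * D)] at hclose
      nlinarith [hclose]
    have hexpand : ⟪g (x s), u⟫ - ⟪g (x s), w⟫ =
        (⟪g xs, u⟫ - ⟪g xs, w⟫) + ⟪g (x s) - g xs, u - w⟫ := by
      simp only [inner_sub_left, inner_sub_right]
      ring
    have habs := (abs_le.1 hub).1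
    linarith
  have hxs' : xs ∈ convexHull ℝ (insert (x s) (S : Set (EuclideanSpace ℝ (Fin n)))) := by
    apply convexHull_mono _ hxsF
    intro p hp
    exact Set.mem_insert_of_mem _ (Finset.mem_coe.2 (hFS (Finset.mem_coe.1 hp)))
  have hle := hxopt xs hxs'
  exact huniq _ (hxΩ (s + 1)) (le_antisymm hle (hmin _ (hxΩ (s + 1))))
end

section
/- Let Ω be a polytope, f smooth with L_f-Lipschitz gradient, x⋆ the unique solution with strict complementarity gap δ > 0. If ‖x_t − x⋆‖ ≤ δ/(2 L_f D), then for every vertex v of the optimal face F(x⋆) and every vertex u not in F(x⋆): ⟨∇f(x_t), v⟩ − ⟨∇f(x_t), u⟩ ≤ −δ/2. Consequently, the k vertices with smallest inner product with ∇f(x_t) include all vertices of F(x⋆) whenever k ≥ r⋆. -/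
open scoped RealInnerProductSpace

/-- If `‖x_t − x⋆‖ ≤ δ/(2 L D)` then for every vertex `v` of the optimal face
`Fv` and every vertex `u ∉ Fv`, `⟪∇f(x_t), v⟫ − ⟪∇f(x_t), u⟫ ≤ −δ/2`;
consequently any set `S` of `k ≥ r⋆` vertices with smallest inner product with
`∇f(x_t)` contains all vertices of the optimal face. -/
theorem kLOO_identifies_face {n : ℕ}
    (f : EuclideanSpace ℝ (Fin n) → ℝ)
    (g : EuclideanSpace ℝ (Fin n) → EuclideanSpace ℝ (Fin n))
    (Vtx Fv : Finset (EuclideanSpace ℝ (Fin n)))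
    (L D δ : ℝ)
    (hL : 0 < L) (hD : 0 < D) (hδ : 0 < δ)
    (hFsub : Fv ⊆ Vtx)
    (hdiam : ∀ x ∈ convexHull ℝ (Vtx : Set (EuclideanSpace ℝ (Fin n))),
      ∀ y ∈ convexHull ℝ (Vtx : Set (EuclideanSpace ℝ (Fin n))), ‖x - y‖ ≤ D)
    (hgrad : ∀ x, HasGradientAt f (g x) x)
    (hlip : ∀ x y, ‖g x - g y‖ ≤ L * ‖x - y‖)
    (xs : EuclideanSpace ℝ (Fin n))
    (hxsF : xs ∈ convexHull ℝ (Fv : Set (EuclideanSpace ℝ (Fin n))))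
    -- optimality on the face and strict complementarity gap `δ`
    (hopt : ∀ v ∈ Fv, ⟪g xs, v⟫ = ⟪g xs, xs⟫)
    (hgap : ∀ u ∈ Vtx, u ∉ Fv → δ ≤ ⟪g xs, u⟫ - ⟪g xs, xs⟫)
    (xt : EuclideanSpace ℝ (Fin n))
    (hclose : ‖xt - xs‖ ≤ δ / (2 * L * D)) :
    (∀ v ∈ Fv, ∀ u ∈ Vtx, u ∉ Fv → ⟪g xt, v⟫ - ⟪g xt, u⟫ ≤ -δ / 2) ∧
      ∀ S : Finset (EuclideanSpace ℝ (Fin n)), S ⊆ Vtx → Fv.card ≤ S.card →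
        (∀ v ∈ S, ∀ u ∈ Vtx, u ∉ S → ⟪g xt, v⟫ ≤ ⟪g xt, u⟫) → Fv ⊆ S := by
  have key : ∀ v ∈ Fv, ∀ u ∈ Vtx, u ∉ Fv → ⟪g xt, v⟫ - ⟪g xt, u⟫ ≤ -δ / 2 := by
    intro v hv u hu huF
    have hvV : v ∈ convexHull ℝ (Vtx : Set (EuclideanSpace ℝ (Fin n))) :=
      subset_convexHull ℝ _ (hFsub hv)
    have huV : u ∈ convexHull ℝ (Vtx : Set (EuclideanSpace ℝ (Fin n))) :=
      subset_convexHull ℝ _ hu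
    have hvu : ‖v - u‖ ≤ D := hdiam v hvV u huV
    have h1 : ⟪g xs, v⟫ - ⟪g xs, u⟫ ≤ -δ := by
      have hg := hgap u hu huF
      have ho := hopt v hv
      linarith
    have h2 : ⟪g xt - g xs, v - u⟫ ≤ δ / 2 := by
      calc ⟪g xt - g xs, v - u⟫ ≤ ‖g xt - g xs‖ * ‖v - u‖ := real_inner_le_norm _ _
        _ ≤ (L * ‖xt - xs‖) * D := by
            apply mul_le_mul (hlip xt xs) hvu (norm_nonneg _); positivity
        _ ≤ (L * (δ / (2 * L * D))) * D := by
            exact mul_le_mul_of_nonneg_right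
              (mul_le_mul_of_nonneg_left hclose hL.le) hD.le
        _ = δ / 2 := by field_simp
    have hexp : ⟪g xt - g xs, v - u⟫
        = (⟪g xt, v⟫ - ⟪g xt, u⟫) - (⟪g xs, v⟫ - ⟪g xs, u⟫) := by
      simp [inner_sub_left, inner_sub_right]; ring
    linarith
  refine ⟨key, ?_⟩
  intro S hSV hcard hS v hv
  by_contra hvS
  classical
  have hex : ∃ u ∈ S, u ∉ Fv := by
    by_contra h
    push_neg at h
    have hsub : S ⊆ Fv.erase v := fun x hx =>
      Finset.mem_erase.mpr ⟨fun hxv => hvS (by rwa [hxv] at hx), h x hx⟩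
    have h1 := Finset.card_le_card hsub
    have h2 := Finset.card_erase_of_mem hv
    have h3 := Finset.card_pos.mpr ⟨v, hv⟩
    omega
  obtain ⟨u, huS, huF⟩ := hex
  have h1 := key v hv u (hSV huS) huF
  have h2 := hS u huS v (hFsub hv) hvS
  linarith
end

section
/- If strict complementarity holds for minimization of a smooth convex f over a polytope Ω (i.e., x⋆ ∈ ∂Ω is the unique solution and −∇f(x⋆) ∈ relint N_Ω(x⋆)), then the gap δ = min{⟨u − x⋆, ∇f(x⋆)⟩ : u a vertex of Ω not in the minimal face F(x⋆)} is strictly positive; moreover ⟨∇f(x⋆), v⟩ = ⟨∇f(x⋆), x⋆⟩ for every vertex v of F(x⋆). -/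
open scoped RealInnerProductSpace

lemma extend_mem {V : Type*} [NormedAddCommGroup V] [NormedSpace ℝ V] {C : Set V} {z a : V}
    (hz : z ∈ intrinsicInterior ℝ C) (ha : a ∈ C) :
    ∃ ε : ℝ, 0 < ε ∧ z + ε • (z - a) ∈ C := by
  obtain ⟨z', hz', rfl⟩ := hz
  rw [mem_interior_iff_mem_nhds, Metric.mem_nhds_iff] at hz'
  obtain ⟨r, hr, hball⟩ := hz'
  set ε : ℝ := r / (2 * (‖(z' : V) - a‖ + 1)) with hε
  have hpos : 0 < ε := by positivity
  refine ⟨ε, hpos, ?_⟩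
  have hmem : (z' : V) + ε • ((z' : V) - a) ∈ affineSpan ℝ C := by
    have := AffineSubspace.smul_vsub_vadd_mem (affineSpan ℝ C) ε z'.2
      (subset_affineSpan ℝ C ha) z'.2
    simpa [vsub_eq_sub, vadd_eq_add, add_comm] using this
  have hdist : dist (⟨_, hmem⟩ : affineSpan ℝ C) z' < r := by
    rw [Subtype.dist_eq]
    simp only [dist_eq_norm]
    have : (z' : V) + ε • ((z' : V) - a) - z' = ε • ((z' : V) - a) := by abel
    rw [this, norm_smul]
    have h1 : ‖(z' : V) - a‖ < ‖(z' : V) - a‖ + 1 := by linarith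
    calc ‖ε‖ * ‖(z' : V) - a‖ = ε * ‖(z' : V) - a‖ := by rw [Real.norm_of_nonneg hpos.le]
    _ ≤ ε * (‖(z' : V) - a‖ + 1) := by nlinarith
    _ = r / 2 := by rw [hε, div_mul_eq_mul_div, div_eq_iff (by positivity)]; ring
    _ < r := by linarith
  exact hball hdist

/-- Strict complementarity implies a positive gap on a polytope: if `x⋆ ∈ ∂Ω`
is the unique minimizer of a smooth convex `f` over the polytope `Ω = conv(Vtx)`
and `−∇f(x⋆)` lies in the relative interior of the normal cone `N_Ω(x⋆)`, then
`⟪∇f(x⋆), u − x⋆⟫ > 0` for every vertex `u` not on the minimal face `F(x⋆)`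
(so the gap `δ` is strictly positive), and `⟪∇f(x⋆), v⟫ = ⟪∇f(x⋆), x⋆⟫` for
every vertex `v` of `F(x⋆)`. -/
theorem strict_complementarity_gap_polytope {n : ℕ}
    (f : EuclideanSpace ℝ (Fin n) → ℝ)
    (g : EuclideanSpace ℝ (Fin n) → EuclideanSpace ℝ (Fin n))
    (Vtx Fv : Finset (EuclideanSpace ℝ (Fin n)))
    (hFsub : Fv ⊆ Vtx)
    (hgrad : ∀ x, HasGradientAt f (g x) x)
    (hconv : ConvexOn ℝ (convexHull ℝ (Vtx : Set (EuclideanSpace ℝ (Fin n)))) f)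
    (xs : EuclideanSpace ℝ (Fin n))
    (hmin : ∀ y ∈ convexHull ℝ (Vtx : Set (EuclideanSpace ℝ (Fin n))), f xs ≤ f y)
    (huniq : ∀ y ∈ convexHull ℝ (Vtx : Set (EuclideanSpace ℝ (Fin n))), f y = f xs → y = xs)
    -- `x⋆` is on the boundary of `Ω`
    (hbd : xs ∈ frontier (convexHull ℝ (Vtx : Set (EuclideanSpace ℝ (Fin n)))))
    -- `Fv` spans the minimal face containing `x⋆`: `x⋆` is in its relative
    -- interior, the remaining vertices are off this face, and the face admits a
    -- face-defining inequality
    (hxsF : xs ∈ intrinsicInterior ℝ (convexHull ℝ (Fv : Set (EuclideanSpace ℝ (Fin n)))))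
    (hnotin : ∀ u ∈ Vtx, u ∉ Fv → u ∉ convexHull ℝ (Fv : Set (EuclideanSpace ℝ (Fin n))))
    (hface : ∃ (a : EuclideanSpace ℝ (Fin n)) (b : ℝ),
      (∀ v ∈ Fv, ⟪a, v⟫ = b) ∧ (∀ u ∈ Vtx, u ∉ Fv → ⟪a, u⟫ < b) ∧
      ∀ x ∈ convexHull ℝ (Vtx : Set (EuclideanSpace ℝ (Fin n))), ⟪a, x⟫ ≤ b)
    -- strict complementarity: `−∇f(x⋆) ∈ relint N_Ω(x⋆)`
    (hsc : -g xs ∈ intrinsicInterior ℝ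
      {y : EuclideanSpace ℝ (Fin n) |
        ∀ x ∈ convexHull ℝ (Vtx : Set (EuclideanSpace ℝ (Fin n))), ⟪y, x⟫ ≤ ⟪y, xs⟫}) :
    (∀ u ∈ Vtx, u ∉ Fv → 0 < ⟪g xs, u⟫ - ⟪g xs, xs⟫) ∧
      ∀ v ∈ Fv, ⟪g xs, v⟫ = ⟪g xs, xs⟫ := by
  obtain ⟨a, b, haF, haU, haΩ⟩ := hface
  have hsubΩ : convexHull ℝ (Fv : Set (EuclideanSpace ℝ (Fin n))) ⊆
      convexHull ℝ (Vtx : Set (EuclideanSpace ℝ (Fin n))) :=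
    convexHull_mono (by exact_mod_cast hFsub)
  have hxsFv : xs ∈ convexHull ℝ (Fv : Set (EuclideanSpace ℝ (Fin n))) :=
    intrinsicInterior_subset hxsF
  have hxsΩ : xs ∈ convexHull ℝ (Vtx : Set (EuclideanSpace ℝ (Fin n))) := hsubΩ hxsFv
  -- w = -g xs is in the normal cone
  have hwN : ∀ x ∈ convexHull ℝ (Vtx : Set (EuclideanSpace ℝ (Fin n))),
      ⟪-g xs, x⟫ ≤ ⟪-g xs, xs⟫ := intrinsicInterior_subset hsc
  have hge : ∀ x ∈ convexHull ℝ (Vtx : Set (EuclideanSpace ℝ (Fin n))),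
      ⟪g xs, xs⟫ ≤ ⟪g xs, x⟫ := by
    intro x hx
    have := hwN x hx
    simp only [inner_neg_left] at this
    linarith
  -- ⟪a, xs⟫ = b
  have haxs : ⟪a, xs⟫ = b := by
    have hsub : convexHull ℝ (Fv : Set (EuclideanSpace ℝ (Fin n))) ⊆
        {x : EuclideanSpace ℝ (Fin n) | ⟪a, x⟫ = b} := by
      apply convexHull_min
      · intro v hv; exact haF v (by exact_mod_cast hv)
      · intro x hx y hy s t hs ht hst
        simp only [Set.mem_setOf_eq] at hx hy ⊢
        rw [inner_add_right, real_inner_smul_right, real_inner_smul_right, hx, hy]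
        have : s * b + t * b = (s + t) * b := by ring
        rw [this, hst, one_mul]
    exact hsub hxsFv
  constructor
  · -- strict gap
    intro u hu huF
    have huΩ : u ∈ convexHull ℝ (Vtx : Set (EuclideanSpace ℝ (Fin n))) :=
      subset_convexHull ℝ _ hu
    have hle := hge u huΩ
    rcases lt_or_eq_of_le hle with h | heq
    · linarith
    · exfalso
      -- a is in the normal cone
      have haN : a ∈ {y : EuclideanSpace ℝ (Fin n) |
          ∀ x ∈ convexHull ℝ (Vtx : Set (EuclideanSpace ℝ (Fin n))), ⟪y, x⟫ ≤ ⟪y, xs⟫} := by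
        intro x hx
        rw [haxs]
        exact haΩ x hx
      obtain ⟨ε, hε, hmem⟩ := extend_mem hsc haN
      have h1 := hmem u huΩ
      simp only [inner_add_left, real_inner_smul_left, inner_sub_left, inner_neg_left] at h1
      have hau : ⟪a, u⟫ < b := haU u hu huF
      nlinarith [heq, hau, haxs]
  · -- equality on the face
    intro v hv
    have hvFv : v ∈ convexHull ℝ (Fv : Set (EuclideanSpace ℝ (Fin n))) :=
      subset_convexHull ℝ _ (by exact_mod_cast hv)
    have hle := hge v (hsubΩ hvFv)
    obtain ⟨ε, hε, hmem⟩ := extend_mem hxsF hvFv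
    have h1 := hwN _ (hsubΩ hmem)
    simp only [inner_add_right, real_inner_smul_right, inner_sub_right, inner_neg_left] at h1
    nlinarith
end

section
/- Let Ω = {x ∈ R^n : ‖x‖_G := Σ_{g∈G} ‖x_g‖₂ ≤ 1} be the unit group norm ball for a partition G of {1,…,n}. If −∇f(x⋆) ∈ relint N_Ω(x⋆) with x⋆ ∈ ∂Ω, and the groups are ordered so that ‖[∇f(x⋆)]_{g₁}‖₂ ≥ … ≥ ‖[∇f(x⋆)]_{g_{|G|}}‖₂ with support size r⋆ = #{g : (x⋆)_g ≠ 0}, then ‖[∇f(x⋆)]_{g_i}‖₂ are all equal for i = 1,…,r⋆, and δ := ‖[∇f(x⋆)]_{g_{r⋆}}‖₂ − ‖[∇f(x⋆)]_{g_{r⋆+1}}‖₂ > 0. -/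
open scoped RealInnerProductSpace

section Helpers

lemma prolong_aux {E : Type*} [NormedAddCommGroup E] [NormedSpace ℝ E]
    {N : Set E} {y z : E} (hy : y ∈ intrinsicInterior ℝ N) (hz : z ∈ N) :
    ∃ s : ℝ, 0 < s ∧ y + s • (y - z) ∈ N := by
  rw [intrinsicInterior] at hy
  obtain ⟨p, hp, hpy⟩ := hy
  have hzmem : z ∈ affineSpan ℝ N := subset_affineSpan ℝ N hz
  have hymem : y ∈ affineSpan ℝ N := by
    rw [← hpy]; exact p.2
  set γ : ℝ → affineSpan ℝ N := fun s =>
    ⟨AffineMap.lineMap z y (1 + s), AffineMap.lineMap_mem _ hzmem hymem⟩ with hγ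
  have hcont : Continuous γ := by
    apply Continuous.subtype_mk
    have : Continuous fun s : ℝ => AffineMap.lineMap z y (1 + s) := by
      simp only [AffineMap.lineMap_apply_module]
      continuity
    exact this
  have hγ0 : γ 0 = p := by
    apply Subtype.ext
    simp [hγ, AffineMap.lineMap_apply_module, hpy]
  have hopen : IsOpen (γ ⁻¹' interior (Subtype.val ⁻¹' N)) :=
    isOpen_interior.preimage hcont
  have h0mem : (0:ℝ) ∈ γ ⁻¹' interior (Subtype.val ⁻¹' N) := by
    simp only [Set.mem_preimage, hγ0]; exact hp
  obtain ⟨ε, hε, hball⟩ := Metric.isOpen_iff.1 hopen 0 h0mem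
  refine ⟨ε/2, by positivity, ?_⟩
  have : γ (ε/2) ∈ interior (Subtype.val ⁻¹' N) := by
    apply hball
    simp [Real.ball_eq_Ioo]
    constructor <;> nlinarith
  have hN : (γ (ε/2) : E) ∈ N := interior_subset (s := Subtype.val ⁻¹' N) this
  have : (γ (ε/2) : E) = y + (ε/2) • (y - z) := by
    simp [hγ, AffineMap.lineMap_apply_module]
    module
  rwa [this] at hN

variable {n l : ℕ} {G : Fin l → Finset (Fin n)}

lemma part_sum_aux
    (hdisj : ∀ i j : Fin l, i ≠ j → Disjoint (G i) (G j))
    (hcover : ∀ m : Fin n, ∃ i : Fin l, m ∈ G i) (F : Fin n → ℝ) :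
    ∑ j : Fin n, F j = ∑ i : Fin l, ∑ j ∈ G i, F j := by
  rw [← Finset.sum_biUnion]
  · apply Finset.sum_congr _ (fun _ _ => rfl)
    apply Finset.ext
    intro m
    simp only [Finset.mem_biUnion, Finset.mem_univ, true_iff, iff_true]
    obtain ⟨i, hi⟩ := hcover m
    exact ⟨i, trivial, hi⟩
  · intro i _ j _ hij
    exact hdisj i j hij

lemma cs_sum_aux {n : ℕ} (s : Finset (Fin n)) (a b : Fin n → ℝ) :
    ∑ j ∈ s, a j * b j ≤
      Real.sqrt (∑ j ∈ s, a j ^ 2) * Real.sqrt (∑ j ∈ s, b j ^ 2) := by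
  have h := Finset.sum_mul_sq_le_sq_mul_sq s a b
  have h2 : ∑ j ∈ s, a j * b j ≤ Real.sqrt ((∑ j ∈ s, a j * b j) ^ 2) := by
    rw [Real.sqrt_sq_eq_abs]; exact le_abs_self _
  calc ∑ j ∈ s, a j * b j ≤ Real.sqrt ((∑ j ∈ s, a j * b j) ^ 2) := h2
    _ ≤ Real.sqrt ((∑ j ∈ s, a j ^ 2) * ∑ j ∈ s, b j ^ 2) := Real.sqrt_le_sqrt h
    _ = _ := Real.sqrt_mul (by positivity) _

lemma inner_group_aux
    (hdisj : ∀ i j : Fin l, i ≠ j → Disjoint (G i) (G j))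
    (hcover : ∀ m : Fin n, ∃ i : Fin l, m ∈ G i)
    (a b : EuclideanSpace ℝ (Fin n)) :
    ⟪a, b⟫ = ∑ i : Fin l, ∑ j ∈ G i, a j * b j := by
  rw [← part_sum_aux hdisj hcover]
  simp [PiLp.inner_apply, RCLike.inner_apply, mul_comm]

lemma sum_single_group_aux
    (hdisj : ∀ i j : Fin l, i ≠ j → Disjoint (G i) (G j))
    (hcover : ∀ m : Fin n, ∃ i : Fin l, m ∈ G i) (k : Fin l) (F : Fin n → ℝ)
    (hF : ∀ j, j ∉ G k → F j = 0) :
    ∑ j : Fin n, F j = ∑ j ∈ G k, F j := by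
  rw [part_sum_aux hdisj hcover]
  apply Finset.sum_eq_single_of_mem k (Finset.mem_univ k)
  intro i _ hik
  apply Finset.sum_eq_zero
  intro j hj
  exact hF j (Finset.disjoint_left.1 (hdisj i k hik) hj)

lemma gsum_single_group_aux
    (hdisj : ∀ i j : Fin l, i ≠ j → Disjoint (G i) (G j)) (k : Fin l)
    (q : Fin n → ℝ) :
    ∑ i : Fin l, Real.sqrt (∑ j ∈ G i, (if j ∈ G k then q j else 0) ^ 2)
      = Real.sqrt (∑ j ∈ G k, q j ^ 2) := by
  have h1 : ∑ i : Fin l, Real.sqrt (∑ j ∈ G i, (if j ∈ G k then q j else 0) ^ 2)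
      = Real.sqrt (∑ j ∈ G k, (if j ∈ G k then q j else 0) ^ 2) := by
    apply Finset.sum_eq_single_of_mem k (Finset.mem_univ k)
    intro i _ hik
    have h2 : ∑ j ∈ G i, (if j ∈ G k then q j else 0) ^ 2 = 0 := by
      apply Finset.sum_eq_zero
      intro j hj
      rw [if_neg (Finset.disjoint_left.1 (hdisj i k hik) hj)]
      ring
    rw [h2, Real.sqrt_zero]
  rw [h1]
  congr 1
  apply Finset.sum_congr rfl
  intro j hj
  rw [if_pos hj]

end Helpers

set_option maxHeartbeats 1000000 in
/-- Group norm ball: let `Ω = {x : ‖x‖_G ≤ 1}` for a partition `G` of the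
coordinates, with groups ordered so that the group-wise `ℓ₂` norms of the
gradient `∇f(x⋆)` are descending, and let `r⋆` be the number of groups in the
support of `x⋆`.  If `x⋆ ∈ ∂Ω` and `−∇f(x⋆) ∈ relint N_Ω(x⋆)`, then the first
`r⋆` group norms of the gradient coincide, and the gap
`δ = ‖[∇f(x⋆)]_{g_{r⋆}}‖₂ − ‖[∇f(x⋆)]_{g_{r⋆+1}}‖₂` is strictly positive. -/
theorem strict_complementarity_gap_group_norm {n l : ℕ}
    (G : Fin l → Finset (Fin n))
    (hdisj : ∀ i j : Fin l, i ≠ j → Disjoint (G i) (G j))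
    (hcover : ∀ m : Fin n, ∃ i : Fin l, m ∈ G i)
    (f : EuclideanSpace ℝ (Fin n) → ℝ)
    (g : EuclideanSpace ℝ (Fin n) → EuclideanSpace ℝ (Fin n))
    (hgrad : ∀ x, HasGradientAt f (g x) x)
    (xs : EuclideanSpace ℝ (Fin n))
    (Ω : Set (EuclideanSpace ℝ (Fin n)))
    (hΩ : Ω = {x : EuclideanSpace ℝ (Fin n) |
      ∑ i : Fin l, Real.sqrt (∑ j ∈ G i, x j ^ 2) ≤ 1})
    -- group-wise `ℓ₂` norms of the gradient at `x⋆`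
    (gn : Fin l → ℝ)
    (hgn : ∀ i : Fin l, gn i = Real.sqrt (∑ j ∈ G i, g xs j ^ 2))
    -- the groups are ordered so that these norms are descending
    (hsort : ∀ i j : Fin l, i ≤ j → gn j ≤ gn i)
    -- `r⋆` is the number of groups in the support of `x⋆`
    (rstar : ℕ)
    (hr : rstar = (Finset.univ.filter fun i : Fin l => ∃ j ∈ G i, xs j ≠ 0).card)
    (h0 : 0 < rstar) (hrl : rstar < l)
    -- `x⋆ ∈ ∂Ω` and strict complementarity
    (hbd : xs ∈ frontier Ω)
    (hsc : -g xs ∈ intrinsicInterior ℝ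
      {y : EuclideanSpace ℝ (Fin n) | ∀ x ∈ Ω, ⟪y, x⟫ ≤ ⟪y, xs⟫}) :
    (∀ i : Fin l, (i : ℕ) < rstar → gn i = gn ⟨0, by omega⟩) ∧
      0 < gn ⟨rstar - 1, by omega⟩ - gn ⟨rstar, hrl⟩ := by
  classical
  have hl0 : 0 < l := lt_of_le_of_lt (Nat.zero_le _) hrl
  set y : (EuclideanSpace ℝ (Fin n)) := -g xs with hy
  set NN : Set (EuclideanSpace ℝ (Fin n)) := {z : (EuclideanSpace ℝ (Fin n)) | ∀ x ∈ Ω, ⟪z, x⟫ ≤ ⟪z, xs⟫} with hNN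
  have hmemN : ∀ x ∈ Ω, ⟪y, x⟫ ≤ ⟪y, xs⟫ := intrinsicInterior_subset hsc
  set S : Finset (Fin l) :=
    Finset.univ.filter (fun i : Fin l => ∃ j ∈ G i, xs j ≠ 0) with hS
  set i0 : Fin l := ⟨0, hl0⟩ with hi0
  set M : ℝ := gn i0 with hM
  -- basic facts about y
  have hyj : ∀ j, y j = -(g xs j) := fun j => rfl
  have hgn' : ∀ i, Real.sqrt (∑ j ∈ G i, y j ^ 2) = gn i := by
    intro i
    rw [hgn]
    congr 1
    apply Finset.sum_congr rfl
    intro j _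
    rw [hyj, neg_sq]
  have hgnnonneg : ∀ i, 0 ≤ gn i := fun i => by rw [← hgn']; positivity
  have hgnle : ∀ i, gn i ≤ M := fun i => hsort i0 i (Fin.le_def.2 (Nat.zero_le _))
  have hMnonneg : 0 ≤ M := hgnnonneg i0
  -- the norm of xs is 1
  have hcont : Continuous
      (fun x : (EuclideanSpace ℝ (Fin n)) => ∑ i : Fin l, Real.sqrt (∑ j ∈ G i, x j ^ 2)) := by
    apply continuous_finset_sum
    intro i _
    apply Real.continuous_sqrt.comp
    apply continuous_finset_sum
    intro j _
    exact ((EuclideanSpace.proj j).continuous).pow 2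
  have hclosed : IsClosed Ω := by
    rw [hΩ]; exact isClosed_le hcont continuous_const
  have hxsΩ : xs ∈ Ω := hclosed.frontier_subset hbd
  have hle1 : ∑ i : Fin l, Real.sqrt (∑ j ∈ G i, xs j ^ 2) ≤ 1 := by
    have := hxsΩ; rw [hΩ] at this; exact this
  have hge1 : 1 ≤ ∑ i : Fin l, Real.sqrt (∑ j ∈ G i, xs j ^ 2) := by
    by_contra hcon
    push_neg at hcon
    have hopen : IsOpen {x : (EuclideanSpace ℝ (Fin n)) | ∑ i : Fin l, Real.sqrt (∑ j ∈ G i, x j ^ 2) < 1} :=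
      isOpen_lt hcont continuous_const
    have hsub : {x : (EuclideanSpace ℝ (Fin n)) | ∑ i : Fin l, Real.sqrt (∑ j ∈ G i, x j ^ 2) < 1} ⊆ Ω := by
      rw [hΩ]
      intro x hx
      simp only [Set.mem_setOf_eq] at hx ⊢
      exact hx.le
    have hint : xs ∈ interior Ω := interior_maximal hsub hopen hcon
    exact hbd.2 hint
  have hsum1 : ∑ i : Fin l, Real.sqrt (∑ j ∈ G i, xs j ^ 2) = 1 :=
    le_antisymm hle1 hge1
  have h0Ω : (0 : (EuclideanSpace ℝ (Fin n))) ∈ Ω := by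
    rw [hΩ]
    show ∑ i : Fin l, Real.sqrt (∑ j ∈ G i, (0:(EuclideanSpace ℝ (Fin n))) j ^ 2) ≤ 1
    have : ∀ i : Fin l, Real.sqrt (∑ j ∈ G i, (0:(EuclideanSpace ℝ (Fin n))) j ^ 2) = 0 := by
      intro i
      have : ∑ j ∈ G i, (0:(EuclideanSpace ℝ (Fin n))) j ^ 2 = 0 := by
        apply Finset.sum_eq_zero; intro j _; simp
      rw [this, Real.sqrt_zero]
    rw [Finset.sum_congr rfl (fun i _ => this i)]
    simp
  -- inner-product bound
  have hIB : ∀ x : (EuclideanSpace ℝ (Fin n)), ⟪y, x⟫ ≤ ∑ i : Fin l, gn i * Real.sqrt (∑ j ∈ G i, x j ^ 2) := by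
    intro x
    rw [inner_group_aux hdisj hcover]
    apply Finset.sum_le_sum
    intro i _
    calc ∑ j ∈ G i, y j * x j
        ≤ Real.sqrt (∑ j ∈ G i, y j ^ 2) * Real.sqrt (∑ j ∈ G i, x j ^ 2) :=
          cs_sum_aux _ _ _
      _ = gn i * Real.sqrt (∑ j ∈ G i, x j ^ 2) := by rw [hgn']
  have hBound : ∀ x ∈ Ω, ⟪y, x⟫ ≤ M := by
    intro x hx
    rw [hΩ] at hx
    calc ⟪y, x⟫ ≤ ∑ i : Fin l, gn i * Real.sqrt (∑ j ∈ G i, x j ^ 2) := hIB x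
      _ ≤ ∑ i : Fin l, M * Real.sqrt (∑ j ∈ G i, x j ^ 2) :=
          Finset.sum_le_sum (fun i _ =>
            mul_le_mul_of_nonneg_right (hgnle i) (Real.sqrt_nonneg _))
      _ = M * ∑ i : Fin l, Real.sqrt (∑ j ∈ G i, x j ^ 2) := by
          rw [Finset.mul_sum]
      _ ≤ M * 1 := mul_le_mul_of_nonneg_left hx hMnonneg
      _ = M := mul_one M
  -- support facts
  have hScard : S.card = rstar := hr.symm
  have hcpos : ∀ i ∈ S, 0 < Real.sqrt (∑ j ∈ G i, xs j ^ 2) := by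
    intro i hi
    obtain ⟨j, hj, hjne⟩ := (Finset.mem_filter.1 hi).2
    have : 0 < ∑ j' ∈ G i, xs j' ^ 2 :=
      Finset.sum_pos' (fun _ _ => sq_nonneg _) ⟨j, hj, by positivity⟩
    exact Real.sqrt_pos.2 this
  have hczero : ∀ i ∉ S, Real.sqrt (∑ j ∈ G i, xs j ^ 2) = 0 := by
    intro i hi
    have h1 : ∀ j ∈ G i, xs j = 0 := by
      by_contra hcon
      push_neg at hcon
      obtain ⟨j, hj, hjne⟩ := hcon
      exact hi (Finset.mem_filter.2 ⟨Finset.mem_univ i, j, hj, hjne⟩)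
    have : ∑ j ∈ G i, xs j ^ 2 = 0 := by
      apply Finset.sum_eq_zero; intro j hj; rw [h1 j hj]; ring
    rw [this, Real.sqrt_zero]
  -- M is positive
  have hMpos : 0 < M := by
    by_contra hMp
    push_neg at hMp
    have hgn0 : ∀ i, gn i = 0 := fun i =>
      le_antisymm (le_trans (hgnle i) hMp) (hgnnonneg i)
    have hy0 : y = 0 := by
      ext j
      obtain ⟨i, hij⟩ := hcover j
      have h1 : ∑ j' ∈ G i, y j' ^ 2 = 0 := by
        have h2 := hgn' i
        rw [hgn0 i] at h2
        have hnn : 0 ≤ ∑ j' ∈ G i, y j' ^ 2 := by positivity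
        nlinarith [Real.sq_sqrt hnn]
      have h3 := (Finset.sum_eq_zero_iff_of_nonneg
        (fun _ _ => sq_nonneg _)).1 h1 j hij
      have := sq_eq_zero_iff.1 h3
      simpa using this
    -- construct an element of the normal cone with positive pairing
    set v : (EuclideanSpace ℝ (Fin n)) := WithLp.toLp 2 (fun j => ∑ i ∈ S, if j ∈ G i then
      xs j / Real.sqrt (∑ j' ∈ G i, xs j' ^ 2) else 0) with hv
    have hinner_v : ∀ x : (EuclideanSpace ℝ (Fin n)), ⟪v, x⟫ =
        ∑ i ∈ S, ∑ j ∈ G i, (xs j / Real.sqrt (∑ j' ∈ G i, xs j' ^ 2)) * x j := by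
      intro x
      rw [PiLp.inner_apply]
      simp only [RCLike.inner_apply', conj_trivial]
      calc ∑ j, v j * x j
          = ∑ j : Fin n, ∑ i ∈ S, (if j ∈ G i then
              (xs j / Real.sqrt (∑ j' ∈ G i, xs j' ^ 2)) * x j else 0) := by
            apply Finset.sum_congr rfl
            intro j _
            rw [hv]
            simp only [PiLp.toLp_apply]
            rw [Finset.sum_mul]
            apply Finset.sum_congr rfl
            intro i _
            rw [ite_mul, zero_mul]
        _ = ∑ i ∈ S, ∑ j : Fin n, (if j ∈ G i then
              (xs j / Real.sqrt (∑ j' ∈ G i, xs j' ^ 2)) * x j else 0) :=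
            Finset.sum_comm
        _ = _ := by
            apply Finset.sum_congr rfl
            intro i _
            rw [Finset.sum_ite_mem, Finset.univ_inter]
    have hvxs : ⟪v, xs⟫ = 1 := by
      rw [hinner_v]
      have hstep : ∀ i ∈ S, ∑ j ∈ G i,
          (xs j / Real.sqrt (∑ j' ∈ G i, xs j' ^ 2)) * xs j
          = Real.sqrt (∑ j' ∈ G i, xs j' ^ 2) := by
        intro i hi
        have hcp := hcpos i hi
        have hsq : Real.sqrt (∑ j' ∈ G i, xs j' ^ 2) ^ 2 = ∑ j' ∈ G i, xs j' ^ 2 :=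
          Real.sq_sqrt (by positivity)
        have h4 : ∑ j ∈ G i, (xs j / Real.sqrt (∑ j' ∈ G i, xs j' ^ 2)) * xs j
            = (∑ j ∈ G i, xs j ^ 2) / Real.sqrt (∑ j' ∈ G i, xs j' ^ 2) := by
          rw [Finset.sum_div]
          apply Finset.sum_congr rfl
          intro j _
          ring
        rw [h4, eq_comm, eq_div_iff hcp.ne']
        linear_combination hsq
      rw [Finset.sum_congr rfl hstep]
      rw [Finset.sum_subset (Finset.subset_univ S) (fun i _ hi => hczero i hi)]
      exact hsum1
    have hvN : v ∈ NN := by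
      intro x hx
      have hxle : ∑ i : Fin l, Real.sqrt (∑ j ∈ G i, x j ^ 2) ≤ 1 := by
        rw [hΩ] at hx; exact hx
      have hbnd : ⟪v, x⟫ ≤ ∑ i ∈ S, Real.sqrt (∑ j ∈ G i, x j ^ 2) := by
        rw [hinner_v]
        apply Finset.sum_le_sum
        intro i hi
        have hcp := hcpos i hi
        have hone : Real.sqrt (∑ j ∈ G i,
            (xs j / Real.sqrt (∑ j' ∈ G i, xs j' ^ 2)) ^ 2) = 1 := by
          have hsq : Real.sqrt (∑ j' ∈ G i, xs j' ^ 2) ^ 2 = ∑ j' ∈ G i, xs j' ^ 2 :=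
            Real.sq_sqrt (by positivity)
          have h5 : ∑ j ∈ G i, (xs j / Real.sqrt (∑ j' ∈ G i, xs j' ^ 2)) ^ 2
              = (∑ j ∈ G i, xs j ^ 2) / Real.sqrt (∑ j' ∈ G i, xs j' ^ 2) ^ 2 := by
            rw [Finset.sum_div]
            apply Finset.sum_congr rfl
            intro j _
            ring
          rw [h5, hsq, div_self (Real.sqrt_pos.1 hcp).ne', Real.sqrt_one]
        calc ∑ j ∈ G i, (xs j / Real.sqrt (∑ j' ∈ G i, xs j' ^ 2)) * x j
            ≤ Real.sqrt (∑ j ∈ G i,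
                (xs j / Real.sqrt (∑ j' ∈ G i, xs j' ^ 2)) ^ 2)
              * Real.sqrt (∑ j ∈ G i, x j ^ 2) := cs_sum_aux _ _ _
          _ = Real.sqrt (∑ j ∈ G i, x j ^ 2) := by rw [hone, one_mul]
      have hsubsum : ∑ i ∈ S, Real.sqrt (∑ j ∈ G i, x j ^ 2)
          ≤ ∑ i : Fin l, Real.sqrt (∑ j ∈ G i, x j ^ 2) :=
        Finset.sum_le_sum_of_subset_of_nonneg (Finset.subset_univ S)
          (fun i _ _ => Real.sqrt_nonneg _)
      calc ⟪v, x⟫ ≤ ∑ i ∈ S, Real.sqrt (∑ j ∈ G i, x j ^ 2) := hbnd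
        _ ≤ ∑ i : Fin l, Real.sqrt (∑ j ∈ G i, x j ^ 2) := hsubsum
        _ ≤ 1 := hxle
        _ = ⟪v, xs⟫ := hvxs.symm
    obtain ⟨s, hs, hsN⟩ := prolong_aux hsc hvN
    have hineq := hsN 0 h0Ω
    rw [hy0] at hineq
    have hL : ⟪(0:(EuclideanSpace ℝ (Fin n))) + s • ((0:(EuclideanSpace ℝ (Fin n))) - v), (0:(EuclideanSpace ℝ (Fin n)))⟫ = 0 := inner_zero_right _
    have hR : ⟪(0:(EuclideanSpace ℝ (Fin n))) + s • ((0:(EuclideanSpace ℝ (Fin n))) - v), xs⟫ = -s := by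
      rw [zero_add, zero_sub, real_inner_smul_left, inner_neg_left, hvxs]
      ring
    rw [hL, hR] at hineq
    linarith
  -- ⟪y, xs⟫ = M
  have probe : ∀ k : Fin l, ∑ j ∈ G k, y j ^ 2 = M ^ 2 →
      ⟪y, (WithLp.toLp 2 (fun j => if j ∈ G k then y j / M else 0) : (EuclideanSpace ℝ (Fin n)))⟫ = M ∧
      (WithLp.toLp 2 (fun j => if j ∈ G k then y j / M else 0) : (EuclideanSpace ℝ (Fin n))) ∈ Ω := by
    intro k hk
    constructor
    · rw [PiLp.inner_apply]
      simp only [RCLike.inner_apply', conj_trivial]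
      calc ∑ j : Fin n, y j * (if j ∈ G k then y j / M else 0)
          = ∑ j : Fin n, (if j ∈ G k then y j * (y j / M) else 0) := by
            apply Finset.sum_congr rfl
            intro j _
            rw [mul_ite, mul_zero]
        _ = ∑ j ∈ G k, y j * (y j / M) := by
            rw [Finset.sum_ite_mem, Finset.univ_inter]
        _ = (∑ j ∈ G k, y j ^ 2) / M := by
            rw [Finset.sum_div]
            apply Finset.sum_congr rfl
            intro j _
            ring
        _ = M := by rw [hk, sq, mul_div_assoc, div_self hMpos.ne', mul_one]
    · rw [hΩ]
      show ∑ i : Fin l, Real.sqrt (∑ j ∈ G i,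
        (if j ∈ G k then y j / M else 0) ^ 2) ≤ 1
      rw [gsum_single_group_aux hdisj k (fun j => y j / M)]
      have h6 : ∑ j ∈ G k, (y j / M) ^ 2 = 1 := by
        have h7 : ∑ j ∈ G k, (y j / M) ^ 2 = (∑ j ∈ G k, y j ^ 2) / M ^ 2 := by
          rw [Finset.sum_div]
          apply Finset.sum_congr rfl
          intro j _
          ring
        rw [h7, hk, div_self (pow_ne_zero 2 hMpos.ne')]
      rw [h6, Real.sqrt_one]
  have hMsq0 : ∑ j ∈ G i0, y j ^ 2 = M ^ 2 := by
    have h8 := hgn' i0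
    have hnn : 0 ≤ ∑ j ∈ G i0, y j ^ 2 := by positivity
    calc ∑ j ∈ G i0, y j ^ 2 = Real.sqrt (∑ j ∈ G i0, y j ^ 2) ^ 2 :=
          (Real.sq_sqrt hnn).symm
      _ = M ^ 2 := by rw [h8]
  have hyxs : ⟪y, xs⟫ = M := by
    obtain ⟨hip, hmem⟩ := probe i0 hMsq0
    exact le_antisymm (hBound xs hxsΩ) (hip ▸ hmemN _ hmem)
  -- all support groups have gradient norm M
  have hkeyS : ∀ i ∈ S, gn i = M := by
    have h1 : M ≤ ∑ i : Fin l, gn i * Real.sqrt (∑ j ∈ G i, xs j ^ 2) := by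
      rw [← hyxs]; exact hIB xs
    have hzero : ∑ i : Fin l, (M - gn i) * Real.sqrt (∑ j ∈ G i, xs j ^ 2) = 0 := by
      have e1 : ∑ i : Fin l, (M - gn i) * Real.sqrt (∑ j ∈ G i, xs j ^ 2)
          = M * (∑ i : Fin l, Real.sqrt (∑ j ∈ G i, xs j ^ 2))
            - ∑ i : Fin l, gn i * Real.sqrt (∑ j ∈ G i, xs j ^ 2) := by
        rw [Finset.mul_sum, ← Finset.sum_sub_distrib]
        apply Finset.sum_congr rfl
        intro i _
        ring
      have e2 : ∑ i : Fin l, (M - gn i) * Real.sqrt (∑ j ∈ G i, xs j ^ 2) ≤ 0 := by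
        rw [e1, hsum1, mul_one]
        linarith
      have e3 : 0 ≤ ∑ i : Fin l, (M - gn i) * Real.sqrt (∑ j ∈ G i, xs j ^ 2) :=
        Finset.sum_nonneg (fun i _ =>
          mul_nonneg (by linarith [hgnle i]) (Real.sqrt_nonneg _))
      linarith
    intro i hi
    have h9 := (Finset.sum_eq_zero_iff_of_nonneg (fun i _ =>
      mul_nonneg (by linarith [hgnle i]) (Real.sqrt_nonneg _))).1 hzero i
      (Finset.mem_univ i)
    rcases mul_eq_zero.1 h9 with h10 | h10
    · linarith
    · exact absurd h10 (hcpos i hi).ne'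
  -- part (a)
  have hA : ∀ i : Fin l, (i : ℕ) < rstar → gn i = gn ⟨0, by omega⟩ := by
    intro i hi
    have hj : ∃ j ∈ S, i ≤ j := by
      by_contra hcon
      push_neg at hcon
      have hsub : S ⊆ Finset.Iio i := by
        intro j hjS
        exact Finset.mem_Iio.2 (lt_of_not_ge (fun h => absurd h (not_le.2 (hcon j hjS))))
      have := Finset.card_le_card hsub
      rw [Fin.card_Iio] at this
      omega
    obtain ⟨j, hjS, hij⟩ := hj
    have hjM := hkeyS j hjS
    have h17 := hsort i j hij
    rw [hjM] at h17
    exact le_antisymm (hgnle i) h17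
  refine ⟨hA, ?_⟩
  -- part (b)
  by_contra hcon
  push_neg at hcon
  set b : Fin l := ⟨rstar, hrl⟩ with hb
  have hga : gn ⟨rstar - 1, by omega⟩ = M := by
    apply hA ⟨rstar - 1, by omega⟩
    show rstar - 1 < rstar
    omega
  have hgb : gn b = M := by
    have h11 : gn ⟨rstar - 1, by omega⟩ ≤ gn b := by linarith [hcon]
    have h12 : gn b ≤ M := hgnle b
    rw [hga] at h11
    linarith
  have hTS : ¬ (Finset.Iic b ⊆ S) := by
    intro hsub
    have := Finset.card_le_card hsub
    rw [Fin.card_Iic] at this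
    have hbv : (b : ℕ) = rstar := rfl
    omega
  obtain ⟨k, hkT, hkS⟩ := Finset.not_subset.1 hTS
  have hk_le : k ≤ b := Finset.mem_Iic.1 hkT
  have hgk : gn k = M := by
    have h18 := hsort k b hk_le
    rw [hgb] at h18
    exact le_antisymm (hgnle k) h18
  have hxk0 : ∀ j ∈ G k, xs j = 0 := by
    by_contra hcon2
    push_neg at hcon2
    obtain ⟨j, hj, hjne⟩ := hcon2
    exact hkS (Finset.mem_filter.2 ⟨Finset.mem_univ k, j, hj, hjne⟩)
  have hMsqk : ∑ j ∈ G k, y j ^ 2 = M ^ 2 := by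
    have h13 := hgn' k
    rw [hgk] at h13
    have hnn : 0 ≤ ∑ j ∈ G k, y j ^ 2 := by positivity
    calc ∑ j ∈ G k, y j ^ 2 = Real.sqrt (∑ j ∈ G k, y j ^ 2) ^ 2 :=
          (Real.sq_sqrt hnn).symm
      _ = M ^ 2 := by rw [h13]
  obtain ⟨hipk, hmemk⟩ := probe k hMsqk
  set x₁ : (EuclideanSpace ℝ (Fin n)) := WithLp.toLp 2 (fun j => if j ∈ G k then y j / M else 0) with hx₁
  set u : (EuclideanSpace ℝ (Fin n)) := WithLp.toLp 2 (fun j => if j ∈ G k then y j else 0) with hu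
  have huxs : ⟪u, xs⟫ = 0 := by
    rw [PiLp.inner_apply]
    simp only [RCLike.inner_apply', conj_trivial]
    apply Finset.sum_eq_zero
    intro j _
    by_cases hj : j ∈ G k
    · have : xs j = 0 := hxk0 j hj
      rw [this, mul_zero]
    · have : u j = 0 := by rw [hu]; simp only [PiLp.toLp_apply]; rw [if_neg hj]
      rw [this, zero_mul]
  have hux₁ : ⟪u, x₁⟫ = ⟪y, x₁⟫ := by
    rw [PiLp.inner_apply, PiLp.inner_apply]
    apply Finset.sum_congr rfl
    intro j _
    simp only [RCLike.inner_apply', conj_trivial]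
    by_cases hj : j ∈ G k
    · have : u j = y j := by rw [hu]; simp only [PiLp.toLp_apply]; rw [if_pos hj]
      rw [this]
    · have h14 : x₁ j = 0 := by rw [hx₁]; simp only [PiLp.toLp_apply]; rw [if_neg hj]
      rw [h14, mul_zero, mul_zero]
  have hsubN : y - u ∈ NN := by
    intro x hx
    have hxle : ∑ i : Fin l, Real.sqrt (∑ j ∈ G i, x j ^ 2) ≤ 1 := by
      rw [hΩ] at hx; exact hx
    have hL : ⟪y - u, x⟫ ≤ M := by
      rw [inner_group_aux hdisj hcover]
      have hterm : ∀ i : Fin l, ∑ j ∈ G i, (y - u) j * x j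
          ≤ gn i * Real.sqrt (∑ j ∈ G i, x j ^ 2) := by
        intro i
        by_cases hik : i = k
        · subst hik
          have hz : ∀ j ∈ G i, (y - u) j * x j = 0 := by
            intro j hj
            have : (y - u) j = y j - u j := rfl
            rw [this]
            have : u j = y j := by rw [hu]; simp only [PiLp.toLp_apply]; rw [if_pos hj]
            rw [this, sub_self, zero_mul]
          rw [Finset.sum_eq_zero hz]
          exact mul_nonneg (hgnnonneg i) (Real.sqrt_nonneg _)
        · have hz : ∀ j ∈ G i, (y - u) j * x j = y j * x j := by
            intro j hj
            have h15 : (y - u) j = y j - u j := rfl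
            have h16 : u j = 0 := by
              rw [hu]; simp only [PiLp.toLp_apply]
              rw [if_neg (Finset.disjoint_left.1 (hdisj i k hik) hj)]
            rw [h15, h16, sub_zero]
          rw [Finset.sum_congr rfl hz]
          calc ∑ j ∈ G i, y j * x j
              ≤ Real.sqrt (∑ j ∈ G i, y j ^ 2) * Real.sqrt (∑ j ∈ G i, x j ^ 2) :=
                cs_sum_aux _ _ _
            _ = gn i * Real.sqrt (∑ j ∈ G i, x j ^ 2) := by rw [hgn']
      calc ∑ i : Fin l, ∑ j ∈ G i, (y - u) j * x j
          ≤ ∑ i : Fin l, gn i * Real.sqrt (∑ j ∈ G i, x j ^ 2) :=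
            Finset.sum_le_sum (fun i _ => hterm i)
        _ ≤ ∑ i : Fin l, M * Real.sqrt (∑ j ∈ G i, x j ^ 2) :=
            Finset.sum_le_sum (fun i _ =>
              mul_le_mul_of_nonneg_right (hgnle i) (Real.sqrt_nonneg _))
        _ = M * ∑ i : Fin l, Real.sqrt (∑ j ∈ G i, x j ^ 2) := by
            rw [Finset.mul_sum]
        _ ≤ M * 1 := mul_le_mul_of_nonneg_left hxle hMnonneg
        _ = M := mul_one M
    have hR : ⟪y - u, xs⟫ = M := by
      rw [inner_sub_left, huxs, hyxs, sub_zero]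
    rw [hR]
    exact hL
  obtain ⟨s, hs, hsN⟩ := prolong_aux hsc hsubN
  have hiden : y + s • (y - (y - u)) = y + s • u := by rw [sub_sub_cancel]
  rw [hiden] at hsN
  have hineq := hsN x₁ hmemk
  rw [inner_add_left, inner_add_left, real_inner_smul_left, real_inner_smul_left,
    hux₁, hipk, huxs, hyxs] at hineq
  nlinarith
end

section
/- Let Ω = {X ∈ S^n : X ⪰ 0, tr X = 1} be the spectrahedron and X⋆ ∈ ∂Ω with −∇f(X⋆) ∈ relint N_Ω(X⋆). Then the smallest r⋆ = rank(X⋆) eigenvalues of ∇f(X⋆) are all equal, the eigenspace of those eigenvalues equals range(X⋆), ⟨∇f(X⋆), X⋆⟩ = λ_{n−i+1}(∇f(X⋆)) for i = 1,…,r⋆, and δ := λ_{n−r⋆}(∇f(X⋆)) − λ_{n−r⋆+1}(∇f(X⋆)) > 0. -/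
open Matrix

attribute [local instance] Matrix.frobeniusNormedAddCommGroup Matrix.normedSpace

section Helpers

variable {n : ℕ}

lemma myTrace_mul_vecMulVec (M : Matrix (Fin n) (Fin n) ℝ) (a b : Fin n → ℝ) :
    (M * vecMulVec a b).trace = b ⬝ᵥ (M *ᵥ a) := by
  simp only [Matrix.trace, Matrix.diag, Matrix.mul_apply, vecMulVec_apply, dotProduct,
    Matrix.mulVec, Finset.mul_sum]
  refine Finset.sum_congr rfl fun x _ => Finset.sum_congr rfl fun y _ => by ring

lemma myTrace_vecMulVec_mul (M : Matrix (Fin n) (Fin n) ℝ) (a b : Fin n → ℝ) :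
    (vecMulVec a b * M).trace = b ⬝ᵥ (M *ᵥ a) := by
  rw [Matrix.trace_mul_comm, myTrace_mul_vecMulVec]

lemma myTrace_vecMulVec (a b : Fin n → ℝ) : (vecMulVec a b).trace = a ⬝ᵥ b := by
  simp [Matrix.trace, Matrix.diag, vecMulVec_apply, dotProduct]

lemma myVecMulVec_mulVec (a b x : Fin n → ℝ) :
    vecMulVec a b *ᵥ x = (b ⬝ᵥ x) • a := by
  ext i
  simp [Matrix.mulVec, vecMulVec_apply, dotProduct, Finset.mul_sum, Finset.sum_mul, mul_comm,
    mul_assoc]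
  refine Finset.sum_congr rfl fun y _ => by ring

lemma myVecMulVec_posSemidef (a : Fin n → ℝ) : (vecMulVec a a).PosSemidef := by
  refine posSemidef_iff_dotProduct_mulVec.mpr ⟨?_, ?_⟩
  · ext i j; simp [vecMulVec_apply, conjTranspose_apply, mul_comm]
  · intro x
    rw [myVecMulVec_mulVec]
    simp only [dotProduct_smul]
    have : star x ⬝ᵥ a = a ⬝ᵥ x := by simp [dotProduct, mul_comm]
    rw [smul_eq_mul, this]
    exact mul_self_nonneg _

lemma myPosSemidef_trace_mul_nonneg {P Q : Matrix (Fin n) (Fin n) ℝ}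
    (hP : P.PosSemidef) (hQ : Q.PosSemidef) : 0 ≤ (P * Q).trace := by
  obtain ⟨B, hB⟩ : ∃ B : Matrix (Fin n) (Fin n) ℝ, P = Bᴴ * B := by
    open scoped MatrixOrder in
    obtain ⟨X, hX, -, hXe⟩ := CFC.exists_sqrt_of_isSelfAdjoint_of_quasispectrumRestricts hP.1
      (QuasispectrumRestricts.nnreal_of_nonneg hP.nonneg)
    exact ⟨X, by rw [← hXe, ← star_eq_conjTranspose, hX.star_eq]⟩
  obtain ⟨C, hC⟩ : ∃ C : Matrix (Fin n) (Fin n) ℝ, Q = Cᴴ * C := by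
    open scoped MatrixOrder in
    obtain ⟨X, hX, -, hXe⟩ := CFC.exists_sqrt_of_isSelfAdjoint_of_quasispectrumRestricts hQ.1
      (QuasispectrumRestricts.nnreal_of_nonneg hQ.nonneg)
    exact ⟨X, by rw [← hXe, ← star_eq_conjTranspose, hX.star_eq]⟩
  have key : (P * Q).trace = ((B * Cᴴ)ᴴ * (B * Cᴴ)).trace := by
    rw [hB, hC]
    rw [Matrix.conjTranspose_mul, Matrix.conjTranspose_conjTranspose, Matrix.mul_assoc,
      Matrix.trace_mul_comm, Matrix.trace_mul_comm (C * Bᴴ)]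
    simp only [Matrix.mul_assoc]
  rw [key]
  simp only [Matrix.trace, Matrix.diag, Matrix.mul_apply, conjTranspose_apply, star_trivial]
  exact Finset.sum_nonneg fun i _ => Finset.sum_nonneg fun j _ => mul_self_nonneg _

lemma myPosSemidef_mul_eq_zero {P Q : Matrix (Fin n) (Fin n) ℝ}
    (hP : P.PosSemidef) (hQ : Q.PosSemidef) (h : (P * Q).trace = 0) : P * Q = 0 := by
  obtain ⟨B, hB⟩ : ∃ B : Matrix (Fin n) (Fin n) ℝ, P = Bᴴ * B := by
    open scoped MatrixOrder in
    obtain ⟨X, hX, -, hXe⟩ := CFC.exists_sqrt_of_isSelfAdjoint_of_quasispectrumRestricts hP.1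
      (QuasispectrumRestricts.nnreal_of_nonneg hP.nonneg)
    exact ⟨X, by rw [← hXe, ← star_eq_conjTranspose, hX.star_eq]⟩
  obtain ⟨C, hC⟩ : ∃ C : Matrix (Fin n) (Fin n) ℝ, Q = Cᴴ * C := by
    open scoped MatrixOrder in
    obtain ⟨X, hX, -, hXe⟩ := CFC.exists_sqrt_of_isSelfAdjoint_of_quasispectrumRestricts hQ.1
      (QuasispectrumRestricts.nnreal_of_nonneg hQ.nonneg)
    exact ⟨X, by rw [← hXe, ← star_eq_conjTranspose, hX.star_eq]⟩
  have key : (P * Q).trace = ((B * Cᴴ)ᴴ * (B * Cᴴ)).trace := by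
    rw [hB, hC]
    rw [Matrix.conjTranspose_mul, Matrix.conjTranspose_conjTranspose, Matrix.mul_assoc,
      Matrix.trace_mul_comm, Matrix.trace_mul_comm (C * Bᴴ)]
    simp only [Matrix.mul_assoc]
  rw [key] at h
  have hz : B * Cᴴ = 0 := by
    simp only [Matrix.trace, Matrix.diag, Matrix.mul_apply, conjTranspose_apply,
      star_trivial] at h
    rw [Finset.sum_eq_zero_iff_of_nonneg
      (fun i _ => Finset.sum_nonneg fun j _ => mul_self_nonneg _)] at h
    ext i j
    have := h j (Finset.mem_univ j)
    rw [Finset.sum_eq_zero_iff_of_nonneg (fun k _ => mul_self_nonneg _)] at this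
    exact mul_self_eq_zero.mp (this i (Finset.mem_univ i))
  rw [hB, hC, show Bᴴ * B * (Cᴴ * C) = Bᴴ * (B * Cᴴ) * C by
    simp only [Matrix.mul_assoc], hz]
  simp

lemma myIntrinsicInterior_ray {V : Type*} [AddCommGroup V] [Module ℝ V] [TopologicalSpace V]
    [IsTopologicalAddGroup V] [ContinuousSMul ℝ V]
    (s : Set V) (x y : V) (hx : x ∈ intrinsicInterior ℝ s) (hy : y ∈ s) :
    ∃ ε : ℝ, 0 < ε ∧ x + ε • (x - y) ∈ s := by
  obtain ⟨z, hz, hzx⟩ := hx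
  have hxs : x ∈ s := by
    have := interior_subset hz
    simpa [hzx] using this
  have hxA : x ∈ affineSpan ℝ s := subset_affineSpan ℝ s hxs
  have hyA : y ∈ affineSpan ℝ s := subset_affineSpan ℝ s hy
  have hd : x - y ∈ (affineSpan ℝ s).direction := by
    simpa using AffineSubspace.vsub_mem_direction hxA hyA
  have hmem : ∀ t : ℝ, x + t • (x - y) ∈ affineSpan ℝ s := fun t => by
    have := AffineSubspace.vadd_mem_of_mem_direction
      (Submodule.smul_mem _ t hd) hxA
    simpa [vadd_eq_add, add_comm] using this
  set c : ℝ → (affineSpan ℝ s) := fun t => ⟨x + t • (x - y), hmem t⟩ with hc_def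
  have hc : Continuous c := by
    apply Continuous.subtype_mk
    fun_prop
  have h0 : c 0 ∈ interior ((↑) ⁻¹' s : Set (affineSpan ℝ s)) := by
    have hz0 : c 0 = z := Subtype.ext (by simp [hc_def, hzx])
    rw [hz0]; exact hz
  have hnb : c ⁻¹' interior ((↑) ⁻¹' s : Set (affineSpan ℝ s)) ∈ nhds (0 : ℝ) :=
    (isOpen_interior.preimage hc).mem_nhds h0
  obtain ⟨ε, hε, hball⟩ := Metric.mem_nhds_iff.mp hnb
  refine ⟨ε / 2, by positivity, ?_⟩
  have hb : c (ε / 2) ∈ interior ((↑) ⁻¹' s : Set (affineSpan ℝ s)) := by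
    apply hball
    rw [Metric.mem_ball, dist_zero_right, Real.norm_eq_abs, abs_of_pos (by positivity)]
    linarith
  have := interior_subset hb
  simpa [hc_def] using this

lemma myEigen_dot (A : Matrix (Fin n) (Fin n) ℝ) (hA : A.IsHermitian) (i j : Fin n) :
    ⇑(hA.eigenvectorBasis i) ⬝ᵥ ⇑(hA.eigenvectorBasis j) = if i = j then 1 else 0 := by
  have h : star (hA.eigenvectorUnitary : Matrix (Fin n) (Fin n) ℝ) *
      (hA.eigenvectorUnitary : Matrix (Fin n) (Fin n) ℝ) = 1 :=
    Matrix.mem_unitaryGroup_iff'.mp hA.eigenvectorUnitary.2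
  have h2 : (star (hA.eigenvectorUnitary : Matrix (Fin n) (Fin n) ℝ) *
      (hA.eigenvectorUnitary : Matrix (Fin n) (Fin n) ℝ)) i j
      = (1 : Matrix (Fin n) (Fin n) ℝ) i j := by rw [h]
  simp only [Matrix.mul_apply, Matrix.star_apply, star_trivial,
    Matrix.IsHermitian.eigenvectorUnitary_apply, Matrix.one_apply] at h2
  simpa [dotProduct, mul_comm] using h2

lemma myEigen_complete (A : Matrix (Fin n) (Fin n) ℝ) (hA : A.IsHermitian) (v : Fin n → ℝ) :
    ∑ i, (⇑(hA.eigenvectorBasis i) ⬝ᵥ v) • ⇑(hA.eigenvectorBasis i) = v := by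
  have hU : (hA.eigenvectorUnitary : Matrix (Fin n) (Fin n) ℝ) *
      star (hA.eigenvectorUnitary : Matrix (Fin n) (Fin n) ℝ) = 1 :=
    Matrix.mem_unitaryGroup_iff.mp hA.eigenvectorUnitary.2
  have key : (hA.eigenvectorUnitary : Matrix (Fin n) (Fin n) ℝ) *ᵥ
      (star (hA.eigenvectorUnitary : Matrix (Fin n) (Fin n) ℝ) *ᵥ v) = v := by
    rw [Matrix.mulVec_mulVec, hU, Matrix.one_mulVec]
  conv_rhs => rw [← key]
  ext k
  simp only [Finset.sum_apply, Pi.smul_apply, smul_eq_mul, Matrix.mulVec, dotProduct,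
    Matrix.star_apply, star_trivial, Matrix.IsHermitian.eigenvectorUnitary_apply,
    Finset.mul_sum, Finset.sum_mul]
  refine Finset.sum_congr rfl fun i _ => Finset.sum_congr rfl fun l _ => by ring

lemma myEigen_li (A : Matrix (Fin n) (Fin n) ℝ) (hA : A.IsHermitian) :
    LinearIndependent ℝ (fun i : Fin n => (⇑(hA.eigenvectorBasis i) : Fin n → ℝ)) := by
  rw [Fintype.linearIndependent_iff]
  intro g hg i
  have h := congrArg (fun w => ⇑(hA.eigenvectorBasis i) ⬝ᵥ w) hg
  simp only [dotProduct_zero] at h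
  rw [show ⇑(hA.eigenvectorBasis i) ⬝ᵥ (∑ j, g j • ⇑(hA.eigenvectorBasis j))
      = ∑ j, g j * (⇑(hA.eigenvectorBasis i) ⬝ᵥ ⇑(hA.eigenvectorBasis j)) by
    simp only [dotProduct, Finset.sum_apply, Pi.smul_apply, smul_eq_mul, Finset.mul_sum,
      Finset.sum_mul]
    rw [Finset.sum_comm]
    exact Finset.sum_congr rfl fun a _ => Finset.sum_congr rfl fun b _ => by ring] at h
  simpa [myEigen_dot A hA] using h

lemma myDot_mulVec_symm (A : Matrix (Fin n) (Fin n) ℝ) (hA : A.IsHermitian)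
    (x y : Fin n → ℝ) : (A *ᵥ x) ⬝ᵥ y = x ⬝ᵥ (A *ᵥ y) := by
  rw [Matrix.dotProduct_mulVec, ← Matrix.mulVec_transpose]
  have : Aᵀ = A := by
    have := hA.eq
    rwa [Matrix.conjTranspose_eq_transpose_of_trivial] at this
  rw [this, dotProduct_comm]

lemma myPosSemidef_smul {A : Matrix (Fin n) (Fin n) ℝ} (hA : A.PosSemidef) {c : ℝ}
    (hc : 0 ≤ c) : (c • A).PosSemidef := by
  refine posSemidef_iff_dotProduct_mulVec.mpr ⟨?_, ?_⟩
  · rw [Matrix.IsHermitian, Matrix.conjTranspose_smul, star_trivial, hA.1.eq]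
  · intro x
    rw [Matrix.smul_mulVec, dotProduct_smul, smul_eq_mul]
    exact mul_nonneg hc (hA.dotProduct_mulVec_nonneg x)

lemma myShift_posSemidef (A : Matrix (Fin n) (Fin n) ℝ) (hA : A.IsHermitian) (μ : ℝ)
    (hμ : ∀ i, μ ≤ hA.eigenvalues i) : (A - μ • 1).PosSemidef := by
  set U := (hA.eigenvectorUnitary : Matrix (Fin n) (Fin n) ℝ) with hUdef
  have hU : U * star U = 1 := Matrix.mem_unitaryGroup_iff.mp hA.eigenvectorUnitary.2
  have h1 : (μ • (1 : Matrix (Fin n) (Fin n) ℝ)) = U * (μ • 1) * star U := by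
    rw [Matrix.mul_smul, Matrix.mul_one, Matrix.smul_mul, hU]
  have key : A - μ • 1 = U * diagonal (fun i => hA.eigenvalues i - μ) * star U := by
    conv_lhs => rw [hA.spectral_theorem, Unitary.conjStarAlgAut_apply, h1]
    rw [← Matrix.sub_mul, ← Matrix.mul_sub]
    congr 1
    congr 1
    have : (μ • (1 : Matrix (Fin n) (Fin n) ℝ)) = diagonal (fun _ => μ) := by
      ext i j; by_cases h : i = j <;> simp [Matrix.one_apply, Matrix.diagonal, h]
    rw [this, Matrix.diagonal_sub]
    ext i
    simp
  rw [key, Matrix.star_eq_conjTranspose]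
  exact (Matrix.posSemidef_diagonal_iff.mpr fun i =>
    sub_nonneg.mpr (hμ i)).mul_mul_conjTranspose_same U

end Helpers

set_option maxHeartbeats 1000000

/-- Spectrahedron strict complementarity: let `Ω = {X ⪰ 0, tr X = 1}`,
`X⋆ ∈ ∂Ω` (i.e. `r⋆ = rank X⋆ < n`) with `−∇f(X⋆)` in the relative interior of
the normal cone.  With `G = ∇f(X⋆)` symmetric and its eigenvalues sorted
descending via the permutation `τ`, the smallest `r⋆` eigenvalues of `G`
coincide, their eigenspace equals `range X⋆`, `⟨G, X⋆⟩ = λ_{n−i+1}(G)` for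
`i = 1, …, r⋆`, and `δ = λ_{n−r⋆}(G) − λ_{n−r⋆+1}(G) > 0`. -/
theorem strict_complementarity_gap_spectrahedron {n : ℕ} (rstar : ℕ)
    (Xs G : Matrix (Fin n) (Fin n) ℝ)
    (hXs : Xs.PosSemidef) (htr : Xs.trace = 1)
    (hGsymm : G.IsHermitian)
    (hr : rstar = Xs.rank) (h0 : 0 < rstar) (hrn : rstar < n)
    (Ω : Set (Matrix (Fin n) (Fin n) ℝ))
    (hΩ : Ω = {X : Matrix (Fin n) (Fin n) ℝ | X.PosSemidef ∧ X.trace = 1})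
    -- `τ` sorts the eigenvalues of `G` in descending order
    (τ : Equiv.Perm (Fin n))
    (hsort : ∀ i j : Fin n, i ≤ j → hGsymm.eigenvalues (τ j) ≤ hGsymm.eigenvalues (τ i))
    -- strict complementarity: `−G ∈ relint N_Ω(X⋆)` (normal cone within `S^n`,
    -- with the trace inner product)
    (hsc : -G ∈ intrinsicInterior ℝ
      {Y : Matrix (Fin n) (Fin n) ℝ | Y.IsSymm ∧ ∀ X ∈ Ω, (Y * (X - Xs)).trace ≤ 0}) :
    (∀ i : Fin n, n - rstar ≤ (i : ℕ) →
        hGsymm.eigenvalues (τ i) = hGsymm.eigenvalues (τ ⟨n - 1, by omega⟩)) ∧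
    (∀ v : Fin n → ℝ,
        G *ᵥ v = hGsymm.eigenvalues (τ ⟨n - 1, by omega⟩) • v ↔
          v ∈ LinearMap.range Xs.mulVecLin) ∧
    ((G * Xs).trace = hGsymm.eigenvalues (τ ⟨n - 1, by omega⟩)) ∧
    (0 < hGsymm.eigenvalues (τ ⟨n - rstar - 1, by omega⟩) -
        hGsymm.eigenvalues (τ ⟨n - rstar, by omega⟩)) := by
  classical
  have hn : 0 < n := by omega
  obtain ⟨hGsym', hineq⟩ := intrinsicInterior_subset hsc
  set μ : ℝ := hGsymm.eigenvalues (τ ⟨n - 1, by omega⟩) with hμdef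
  set b : Fin n → Fin n → ℝ := fun i => ⇑(hGsymm.eigenvectorBasis i) with hbdef
  have hbG : ∀ i, G *ᵥ b i = hGsymm.eigenvalues i • b i :=
    fun i => hGsymm.mulVec_eigenvectorBasis i
  -- μ is the minimal eigenvalue
  have hmin : ∀ i : Fin n, μ ≤ hGsymm.eigenvalues i := by
    intro i
    have hle : τ.symm i ≤ (⟨n - 1, by omega⟩ : Fin n) := by
      rw [Fin.le_def]
      have := (τ.symm i).isLt
      simp only []
      omega
    have h := hsort (τ.symm i) ⟨n - 1, by omega⟩ hle
    simpa [hμdef] using h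
  -- trace upper bound via unit eigenvector
  have hGXs_le : (G * Xs).trace ≤ μ := by
    set u := b (τ ⟨n - 1, by omega⟩) with hudef
    have huu : u ⬝ᵥ u = 1 := by
      simpa using myEigen_dot G hGsymm (τ ⟨n - 1, by omega⟩) (τ ⟨n - 1, by omega⟩)
    have hX₀ : vecMulVec u u ∈ Ω := by
      rw [hΩ]
      exact ⟨myVecMulVec_posSemidef u, by rw [myTrace_vecMulVec, huu]⟩
    have h := hineq _ hX₀
    have hexp : ((-G) * (vecMulVec u u - Xs)).trace
        = -(u ⬝ᵥ (G *ᵥ u)) + (G * Xs).trace := by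
      rw [show (-G) * (vecMulVec u u - Xs) = -(G * vecMulVec u u) + G * Xs by noncomm_ring]
      rw [Matrix.trace_add, Matrix.trace_neg, myTrace_mul_vecMulVec]
    rw [hexp] at h
    have hGu : u ⬝ᵥ (G *ᵥ u) = μ := by
      rw [hudef, hbG, dotProduct_smul, smul_eq_mul]
      rw [← hudef, huu, mul_one, hμdef]
    linarith
  have hshift : (G - μ • 1).PosSemidef := myShift_posSemidef G hGsymm μ hmin
  have htrace_shift : ((G - μ • 1) * Xs).trace = (G * Xs).trace - μ := by
    rw [Matrix.sub_mul, Matrix.trace_sub, Matrix.smul_mul, Matrix.one_mul,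
      Matrix.trace_smul, htr]
    simp
  have hGXs_ge : μ ≤ (G * Xs).trace := by
    have h := myPosSemidef_trace_mul_nonneg hshift hXs
    rw [htrace_shift] at h
    linarith
  have htrGXs : (G * Xs).trace = μ := le_antisymm hGXs_le hGXs_ge
  -- G Xs = μ Xs
  have hGXs : G * Xs = μ • Xs := by
    have h0' : ((G - μ • 1) * Xs).trace = 0 := by rw [htrace_shift, htrGXs, sub_self]
    have hz := myPosSemidef_mul_eq_zero hshift hXs h0'
    rw [Matrix.sub_mul, Matrix.smul_mul, Matrix.one_mul, sub_eq_zero] at hz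
    exact hz
  -- range Xs ⊆ eigenspace of μ
  have hRsub : ∀ v ∈ LinearMap.range Xs.mulVecLin, G *ᵥ v = μ • v := by
    rintro v ⟨w, rfl⟩
    rw [Matrix.mulVecLin_apply, Matrix.mulVec_mulVec, hGXs, Matrix.smul_mulVec]
  -- eigenspace of μ ⊆ range Xs  (uses strict complementarity)
  have hXH := hXs.1
  set w : Fin n → Fin n → ℝ := fun i => ⇑(hXH.eigenvectorBasis i) with hwdef
  have hwX : ∀ i, Xs *ᵥ w i = hXH.eigenvalues i • w i :=
    fun i => hXH.mulVec_eigenvectorBasis i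
  have hEsub : ∀ v : Fin n → ℝ, G *ᵥ v = μ • v → v ∈ LinearMap.range Xs.mulVecLin := by
    intro v hv
    set p := ∑ i ∈ Finset.univ.filter (fun i => hXH.eigenvalues i ≠ 0),
      (w i ⬝ᵥ v) • w i with hpdef
    set q := ∑ i ∈ Finset.univ.filter (fun i => ¬ hXH.eigenvalues i ≠ 0),
      (w i ⬝ᵥ v) • w i with hqdef
    have hpq : p + q = v := by
      rw [hpdef, hqdef, Finset.sum_filter_add_sum_filter_not]
      exact myEigen_complete Xs hXH v
    have hpR : p ∈ LinearMap.range Xs.mulVecLin := by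
      apply Submodule.sum_mem
      intro i hi
      have hα0 : hXH.eigenvalues i ≠ 0 := (Finset.mem_filter.mp hi).2
      apply Submodule.smul_mem
      exact ⟨(hXH.eigenvalues i)⁻¹ • w i, by
        rw [Matrix.mulVecLin_apply, Matrix.mulVec_smul, hwX, smul_smul,
          inv_mul_cancel₀ hα0, one_smul]⟩
    have hq0 : Xs *ᵥ q = 0 := by
      rw [hqdef]
      rw [show Xs *ᵥ (∑ i ∈ Finset.univ.filter (fun i => ¬ hXH.eigenvalues i ≠ 0),
          (w i ⬝ᵥ v) • w i)
          = ∑ i ∈ Finset.univ.filter (fun i => ¬ hXH.eigenvalues i ≠ 0),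
            (w i ⬝ᵥ v) • (Xs *ᵥ w i) by
        rw [← Matrix.mulVecLin_apply, map_sum]
        exact Finset.sum_congr rfl fun i _ => by
          rw [LinearMap.map_smul, Matrix.mulVecLin_apply]]
      apply Finset.sum_eq_zero
      intro i hi
      have hz : hXH.eigenvalues i = 0 := not_not.mp (Finset.mem_filter.mp hi).2
      rw [hwX, hz, zero_smul, smul_zero]
    suffices hqz : q = 0 by
      rw [← hpq, hqz, add_zero]; exact hpR
    by_contra hqne
    have hGq : G *ᵥ q = μ • q := by
      have hGp : G *ᵥ p = μ • p := hRsub p hpR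
      have hquv : q = v - p := by rw [← hpq]; abel
      rw [hquv, Matrix.mulVec_sub, hv, hGp, ← smul_sub]
    have hnn : (0:ℝ) ≤ q ⬝ᵥ q := Finset.sum_nonneg fun i _ => mul_self_nonneg _
    have hqq : 0 < q ⬝ᵥ q := by
      rcases eq_or_lt_of_le hnn with h | h
      · exfalso
        apply hqne
        have := (dotProduct_star_self_eq_zero (v := q))
        rw [star_trivial] at this
        exact this.mp h.symm
      · exact h
    -- -G - q qᵀ lies in the normal cone
    have hGsymS : G.IsSymm := by
      rw [Matrix.IsSymm]
      have := hGsymm.eq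
      rwa [Matrix.conjTranspose_eq_transpose_of_trivial] at this
    have hDsymm : (vecMulVec q q).IsSymm := by
      rw [Matrix.IsSymm]; ext i j; simp [Matrix.transpose_apply, vecMulVec_apply, mul_comm]
    have hmemN : -G - vecMulVec q q ∈
        {Y : Matrix (Fin n) (Fin n) ℝ | Y.IsSymm ∧ ∀ X ∈ Ω, (Y * (X - Xs)).trace ≤ 0} := by
      constructor
      · rw [Matrix.IsSymm, Matrix.transpose_sub, Matrix.transpose_neg, hGsymS, hDsymm]
      · intro X hX
        have h1 := hineq X hX
        have hXpsd : X.PosSemidef := by rw [hΩ] at hX; exact hX.1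
        have hexp : ((-G - vecMulVec q q) * (X - Xs)).trace
            = ((-G) * (X - Xs)).trace - (q ⬝ᵥ (X *ᵥ q) - q ⬝ᵥ (Xs *ᵥ q)) := by
          rw [Matrix.sub_mul, Matrix.trace_sub]
          congr 1
          rw [Matrix.mul_sub, Matrix.trace_sub, myTrace_vecMulVec_mul, myTrace_vecMulVec_mul]
        rw [hexp]
        have hXq : 0 ≤ q ⬝ᵥ (X *ᵥ q) := by
          have := hXpsd.dotProduct_mulVec_nonneg q; rwa [star_trivial] at this
        have hXsq : q ⬝ᵥ (Xs *ᵥ q) = 0 := by rw [hq0, dotProduct_zero]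
        linarith
    obtain ⟨ε, hε, hmem'⟩ :=
      myIntrinsicInterior_ray _ (-G) (-G - vecMulVec q q) hsc hmemN
    have hkey : -G + ε • vecMulVec q q ∈
        {Y : Matrix (Fin n) (Fin n) ℝ | Y.IsSymm ∧ ∀ X ∈ Ω, (Y * (X - Xs)).trace ≤ 0} := by
      have hD : -G - (-G - vecMulVec q q) = vecMulVec q q := by abel
      rwa [hD] at hmem'
    have hXqΩ : (q ⬝ᵥ q)⁻¹ • vecMulVec q q ∈ Ω := by
      rw [hΩ]
      refine ⟨myPosSemidef_smul (myVecMulVec_posSemidef q) (inv_nonneg.mpr hnn), ?_⟩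
      rw [Matrix.trace_smul, myTrace_vecMulVec, smul_eq_mul, inv_mul_cancel₀ (ne_of_gt hqq)]
    have hfin := hkey.2 _ hXqΩ
    have hYq : (-G + ε • vecMulVec q q) *ᵥ q = (ε * (q ⬝ᵥ q) - μ) • q := by
      rw [Matrix.add_mulVec, Matrix.neg_mulVec, hGq, Matrix.smul_mulVec,
        myVecMulVec_mulVec]
      ext i
      simp only [Pi.add_apply, Pi.neg_apply, Pi.smul_apply, smul_eq_mul]
      ring
    have hcomp : ((-G + ε • vecMulVec q q) * ((q ⬝ᵥ q)⁻¹ • vecMulVec q q - Xs)).trace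
        = (q ⬝ᵥ q)⁻¹ * (q ⬝ᵥ ((-G + ε • vecMulVec q q) *ᵥ q))
          - ((-G + ε • vecMulVec q q) * Xs).trace := by
      rw [Matrix.mul_sub, Matrix.trace_sub, Matrix.mul_smul, Matrix.trace_smul,
        myTrace_mul_vecMulVec, smul_eq_mul]
    have hYXs : ((-G + ε • vecMulVec q q) * Xs).trace = -μ := by
      rw [show (-G + ε • vecMulVec q q) * Xs = -(G * Xs) + ε • (vecMulVec q q * Xs) by
        rw [Matrix.add_mul, Matrix.neg_mul, Matrix.smul_mul]]
      rw [Matrix.trace_add, Matrix.trace_neg, htrGXs, Matrix.trace_smul,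
        myTrace_vecMulVec_mul]
      rw [show q ⬝ᵥ (Xs *ᵥ q) = 0 by rw [hq0, dotProduct_zero]]
      simp
    rw [hcomp, hYq, hYXs, dotProduct_smul, smul_eq_mul] at hfin
    have hss : (q ⬝ᵥ q)⁻¹ * ((ε * (q ⬝ᵥ q) - μ) * (q ⬝ᵥ q)) = ε * (q ⬝ᵥ q) - μ := by
      field_simp
    rw [hss] at hfin
    nlinarith [mul_pos hε hqq]
  -- counting: #{i | eigenvalue i = μ} = rstar
  set T : Finset (Fin n) := Finset.univ.filter (fun i => hGsymm.eigenvalues i = μ) with hTdef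
  have hTcard_le : T.card ≤ rstar := by
    have hmem : ∀ i : {x // x ∈ T}, b i.1 ∈ LinearMap.range Xs.mulVecLin := by
      intro i
      apply hEsub
      rw [hbG, (Finset.mem_filter.mp i.2).2]
    have hLI : LinearIndependent ℝ
        (fun i : {x // x ∈ T} => (⟨b i.1, hmem i⟩ : LinearMap.range Xs.mulVecLin)) := by
      apply LinearIndependent.of_comp (LinearMap.range Xs.mulVecLin).subtype
      exact (myEigen_li G hGsymm).comp Subtype.val Subtype.val_injective
    have hcard := hLI.fintype_card_le_finrank
    rwa [Fintype.card_coe,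
      show Module.finrank ℝ (LinearMap.range Xs.mulVecLin) = Xs.rank from rfl, ← hr] at hcard
  have hTcard_ge : rstar ≤ T.card := by
    have hWle : LinearMap.range Xs.mulVecLin ≤ Submodule.span ℝ ↑(T.image b) := by
      intro v hv
      have hGv := hRsub v hv
      rw [← myEigen_complete G hGsymm v]
      apply Submodule.sum_mem
      intro i _
      by_cases hi : hGsymm.eigenvalues i = μ
      · apply Submodule.smul_mem
        apply Submodule.subset_span
        simp only [Finset.coe_image, Set.mem_image, Finset.mem_coe]
        exact ⟨i, Finset.mem_filter.mpr ⟨Finset.mem_univ i, hi⟩, rfl⟩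
      · have h1 : hGsymm.eigenvalues i * (b i ⬝ᵥ v) = μ * (b i ⬝ᵥ v) := by
          calc hGsymm.eigenvalues i * (b i ⬝ᵥ v)
              = (hGsymm.eigenvalues i • b i) ⬝ᵥ v := by
                rw [smul_dotProduct, smul_eq_mul]
            _ = (G *ᵥ b i) ⬝ᵥ v := by rw [hbG]
            _ = b i ⬝ᵥ (G *ᵥ v) := myDot_mulVec_symm G hGsymm _ _
            _ = b i ⬝ᵥ (μ • v) := by rw [hGv]
            _ = μ * (b i ⬝ᵥ v) := by rw [dotProduct_smul, smul_eq_mul]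
        have h2 : (hGsymm.eigenvalues i - μ) * (b i ⬝ᵥ v) = 0 := by linarith
        have hc : b i ⬝ᵥ v = 0 :=
          (mul_eq_zero.mp h2).resolve_left (sub_ne_zero.mpr hi)
        rw [hc, zero_smul]
        exact Submodule.zero_mem _
    have hle1 : rstar ≤ Module.finrank ℝ (Submodule.span ℝ (↑(T.image b) : Set (Fin n → ℝ))) := by
      calc rstar = Module.finrank ℝ (LinearMap.range Xs.mulVecLin) := by rw [hr]; rfl
        _ ≤ _ := Submodule.finrank_mono hWle
    have hle2 := finrank_span_finset_le_card (R := ℝ) (T.image b)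
    rw [Set.finrank] at hle2
    calc rstar ≤ _ := hle1
      _ ≤ (T.image b).card := hle2
      _ ≤ T.card := Finset.card_image_le
  have hTcard : T.card = rstar := le_antisymm hTcard_le hTcard_ge
  -- positions with eigenvalue μ
  set P : Finset (Fin n) := Finset.univ.filter (fun j => hGsymm.eigenvalues (τ j) = μ)
    with hPdef
  have hPT : P.card = T.card := by
    apply Finset.card_bij (fun j _ => τ j)
    · intro j hj
      exact Finset.mem_filter.mpr ⟨Finset.mem_univ _, (Finset.mem_filter.mp hj).2⟩
    · intro a _ b' _ hab
      exact τ.injective hab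
    · intro t ht
      refine ⟨τ.symm t, Finset.mem_filter.mpr ⟨Finset.mem_univ _, ?_⟩,
        Equiv.apply_symm_apply τ t⟩
      rw [Equiv.apply_symm_apply]
      exact (Finset.mem_filter.mp ht).2
  -- conclusion 1
  have hconc1 : ∀ i : Fin n, n - rstar ≤ (i : ℕ) → hGsymm.eigenvalues (τ i) = μ := by
    intro i hi
    by_contra hne
    have hgt : μ < hGsymm.eigenvalues (τ i) := lt_of_le_of_ne (hmin (τ i)) (Ne.symm hne)
    have hPsub : P ⊆ Finset.Ioi i := by
      intro j hj
      rw [Finset.mem_Ioi]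
      by_contra hle
      push_neg at hle
      have h1 := hsort j i hle
      have hj' := (Finset.mem_filter.mp hj).2
      rw [hj'] at h1
      linarith
    have hcard := Finset.card_le_card hPsub
    rw [hPT, hTcard, Fin.card_Ioi] at hcard
    have hilt := i.isLt
    omega
  -- conclusion 4
  have hconc4 : 0 < hGsymm.eigenvalues (τ ⟨n - rstar - 1, by omega⟩) -
      hGsymm.eigenvalues (τ ⟨n - rstar, by omega⟩) := by
    have hc : hGsymm.eigenvalues (τ (⟨n - rstar, by omega⟩ : Fin n)) = μ :=
      hconc1 _ (by simp)
    rw [hc, sub_pos]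
    rcases lt_or_ge μ (hGsymm.eigenvalues (τ ⟨n - rstar - 1, by omega⟩)) with h | h
    · exact h
    exfalso
    have ha : hGsymm.eigenvalues (τ (⟨n - rstar - 1, by omega⟩ : Fin n)) = μ :=
      le_antisymm h (hmin _)
    have hsub : Finset.Ici (⟨n - rstar - 1, by omega⟩ : Fin n) ⊆ P := by
      intro j hj
      rw [Finset.mem_Ici] at hj
      refine Finset.mem_filter.mpr ⟨Finset.mem_univ _, ?_⟩
      have h1 := hsort _ j hj
      rw [ha] at h1
      exact le_antisymm h1 (hmin _)
    have hcard := Finset.card_le_card hsub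
    rw [Fin.card_Ici] at hcard
    have h2 : n - (n - rstar - 1) ≤ rstar := hcard.trans_eq (hPT.trans hTcard)
    omega
  exact ⟨hconc1, fun v => ⟨hEsub v, hRsub v⟩, htrGXs, hconc4⟩
end

section
/- Let X⋆ ∈ R^{n₁×n₂} lie on the boundary of the unit nuclear norm ball with ‖X⋆‖_nuc = 1 and rank r⋆, with SVD X⋆ = UΣVᵀ. If −∇f(X⋆) ∈ relint N(X⋆) where N(X⋆) is the normal cone of the nuclear norm ball at X⋆, then the top r⋆ singular values of ∇f(X⋆) are all equal, ⟨∇f(X⋆), X⋆⟩ = −σ_i(∇f(X⋆)) for i = 1,…,r⋆, and δ := σ_{r⋆}(∇f(X⋆)) − σ_{r⋆+1}(∇f(X⋆)) > 0. -/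
open Matrix

/-- Rank of two matrices with equal `mulVecLin` kernels agree. -/
lemma rank_eq_of_ker_eq {n : ℕ} (A B : Matrix (Fin n) (Fin n) ℝ)
    (h : LinearMap.ker A.mulVecLin = LinearMap.ker B.mulVecLin) :
    A.rank = B.rank := by
  have hA := LinearMap.finrank_range_add_finrank_ker A.mulVecLin
  have hB := LinearMap.finrank_range_add_finrank_ker B.mulVecLin
  rw [h] at hA
  rw [Matrix.rank, Matrix.rank]
  omega

/-- Nuclear norm ball strict complementarity: let `X⋆ = U diag(d) Vᵀ` have
nuclear norm `1` and rank `r⋆`, on the boundary of the unit nuclear norm ball.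
If `−∇f(X⋆) = λ(UVᵀ + W)` with `λ > 0`, `WᵀU = 0`, `WV = 0` and `‖W‖_op < 1`
(encoded as `I − WᵀW ≻ 0`), i.e. `−∇f(X⋆)` is in the relative interior of the
normal cone, then, with singular values `σᵢ(G)` of `G = ∇f(X⋆)` sorted
descending via `τ`, the top `r⋆` singular values of `G` coincide,
`⟨G, X⋆⟩ = −σᵢ(G)` for `i = 1, …, r⋆`, and
`δ = σ_{r⋆}(G) − σ_{r⋆+1}(G) > 0`. -/
theorem strict_complementarity_gap_nuclear {n₁ n₂ rstar : ℕ}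
    (G Xs : Matrix (Fin n₁) (Fin n₂) ℝ)
    (U : Matrix (Fin n₁) (Fin rstar) ℝ) (V : Matrix (Fin n₂) (Fin rstar) ℝ)
    (d : Fin rstar → ℝ)
    (hU : Uᵀ * U = 1) (hV : Vᵀ * V = 1)
    (hd : ∀ i, 0 < d i)
    (hXs : Xs = U * Matrix.diagonal d * Vᵀ)
    (hnuc : ∑ i, d i = 1)
    (h0 : 0 < rstar) (hr1 : rstar < n₁) (hr2 : rstar < n₂)
    -- sorted singular values of `G`: `sg i = √(λ_{τ i}(Gᵀ G))`, descending
    (τ : Equiv.Perm (Fin n₂)) (sg : Fin n₂ → ℝ)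
    (hsg : ∀ i : Fin n₂,
      sg i = Real.sqrt ((Matrix.isHermitian_conjTranspose_mul_self G).eigenvalues (τ i)))
    (hsort : ∀ i j : Fin n₂, i ≤ j → sg j ≤ sg i)
    -- strict complementarity: `−G` is in the relative interior of the normal
    -- cone of the unit nuclear norm ball at `X⋆`
    (hsc : ∃ lam : ℝ, 0 < lam ∧ ∃ W : Matrix (Fin n₁) (Fin n₂) ℝ,
      Wᵀ * U = 0 ∧ W * V = 0 ∧ ((1 : Matrix (Fin n₂) (Fin n₂) ℝ) - Wᵀ * W).PosDef ∧
      -G = lam • (U * Vᵀ + W)) :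
    (∀ i : Fin n₂, (i : ℕ) < rstar → sg i = sg ⟨0, by omega⟩) ∧
    ((Gᵀ * Xs).trace = -(sg ⟨0, by omega⟩)) ∧
    (0 < sg ⟨rstar - 1, by omega⟩ - sg ⟨rstar, hr2⟩) := by
  obtain ⟨lam, hlam, W, hWU, hWV, hWpd, hG⟩ := hsc
  have hGeq : G = -(lam • (U * Vᵀ + W)) := by rw [← hG, neg_neg]
  have hUW : Uᵀ * W = 0 := by
    have := congrArg Matrix.transpose hWU
    simpa using this
  -- the Gram matrix
  have hexp : (U * Vᵀ + W)ᵀ * (U * Vᵀ + W) = V * Vᵀ + Wᵀ * W := by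
    have e1 : V * Uᵀ * (U * Vᵀ) = V * Vᵀ := by
      rw [Matrix.mul_assoc, ← Matrix.mul_assoc Uᵀ, hU, Matrix.one_mul]
    have e2 : V * Uᵀ * W = 0 := by rw [Matrix.mul_assoc, hUW, Matrix.mul_zero]
    have e3 : Wᵀ * (U * Vᵀ) = 0 := by rw [← Matrix.mul_assoc, hWU, Matrix.zero_mul]
    rw [transpose_add, transpose_mul, transpose_transpose, Matrix.add_mul, Matrix.mul_add,
      Matrix.mul_add, e1, e2, e3, add_zero, zero_add]
  have hA : Gᵀ * G = (lam * lam) • (V * Vᵀ + Wᵀ * W) := by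
    rw [hGeq, transpose_neg, transpose_smul, Matrix.neg_mul, Matrix.mul_neg, neg_neg,
      Matrix.smul_mul, Matrix.mul_smul, hexp, smul_smul]
  set eig : Fin n₂ → ℝ := (Matrix.isHermitian_conjTranspose_mul_self G).eigenvalues with heig
  set Q : Matrix (Fin n₂) (Fin n₂) ℝ := 1 - V * Vᵀ with hQ
  set S : Matrix (Fin n₂) (Fin n₂) ℝ := 1 - Wᵀ * W with hS
  have hQsymm : Qᵀ = Q := by
    rw [hQ, transpose_sub, transpose_one, transpose_mul, transpose_transpose]
  have hQV : Q * V = 0 := by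
    rw [hQ, Matrix.sub_mul, Matrix.one_mul, Matrix.mul_assoc, hV, Matrix.mul_one, sub_self]
  have hWQ : W * Q = W := by
    rw [hQ, Matrix.mul_sub, Matrix.mul_one, ← Matrix.mul_assoc, hWV, Matrix.zero_mul, sub_zero]
  have hQWt : Q * Wᵀ = Wᵀ := by
    have := congrArg Matrix.transpose hWQ
    rwa [transpose_mul, hQsymm] at this
  have hQQ : Q * Q = Q := by
    rw [hQ, Matrix.mul_sub, Matrix.mul_one, Matrix.sub_mul, Matrix.one_mul]
    rw [Matrix.mul_assoc, ← Matrix.mul_assoc Vᵀ, hV, Matrix.one_mul, sub_self, sub_zero]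
  have hQSQ : Q * S * Q = 1 - (V * Vᵀ + Wᵀ * W) := by
    have h1 : Q * S = Q - Wᵀ * W := by
      rw [hS, Matrix.mul_sub, Matrix.mul_one, ← Matrix.mul_assoc, hQWt]
    rw [h1, Matrix.sub_mul, hQQ, Matrix.mul_assoc, hWQ, hQ, sub_sub]
  set B : Matrix (Fin n₂) (Fin n₂) ℝ := (lam * lam) • (1 : Matrix (Fin n₂) (Fin n₂) ℝ) - Gᵀ * G
    with hB
  have hBQSQ : B = (lam * lam) • (Q * S * Q) := by
    rw [hB, hA, hQSQ, smul_sub]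
  -- B is positive semidefinite
  have hSpsd : S.PosSemidef := hWpd.posSemidef
  have hQSQpsd : (Q * S * Q).PosSemidef := by
    have := hSpsd.mul_mul_conjTranspose_same Q
    rwa [conjTranspose_eq_transpose_of_trivial, hQsymm] at this
  have hBpsd : B.PosSemidef := by
    have h := hSpsd.mul_mul_conjTranspose_same (lam • Q)
    have hct : (lam • Q)ᴴ = lam • Q := by
      rw [conjTranspose_eq_transpose_of_trivial, transpose_smul, hQsymm]
    rw [hct] at h
    have heq : (lam • Q) * S * (lam • Q) = B := by
      rw [hBQSQ, Matrix.smul_mul, Matrix.smul_mul, Matrix.mul_smul, smul_smul]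
    rwa [heq] at h
  -- diagonalize B
  set Ue := (Matrix.isHermitian_conjTranspose_mul_self G).eigenvectorUnitary with hUe
  have hUe1 : (Ue : Matrix (Fin n₂) (Fin n₂) ℝ) * star (Ue : Matrix (Fin n₂) (Fin n₂) ℝ) = 1 :=
    Matrix.mem_unitaryGroup_iff.mp Ue.2
  have hUe1' : star (Ue : Matrix (Fin n₂) (Fin n₂) ℝ) * (Ue : Matrix (Fin n₂) (Fin n₂) ℝ) = 1 :=
    Matrix.mem_unitaryGroup_iff'.mp Ue.2
  have hdiagA : star (Ue : Matrix (Fin n₂) (Fin n₂) ℝ) * (Gᵀ * G) *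
      (Ue : Matrix (Fin n₂) (Fin n₂) ℝ) = Matrix.diagonal eig := by
    have := (Matrix.isHermitian_conjTranspose_mul_self G).conjStarAlgAut_star_eigenvectorUnitary
    simp at this
    exact this
  have hdiagB : star (Ue : Matrix (Fin n₂) (Fin n₂) ℝ) * B * (Ue : Matrix (Fin n₂) (Fin n₂) ℝ)
      = Matrix.diagonal (fun j => lam * lam - eig j) := by
    rw [hB, Matrix.mul_sub, Matrix.sub_mul, hdiagA]
    have : star (Ue : Matrix (Fin n₂) (Fin n₂) ℝ) * ((lam * lam) • (1 : Matrix (Fin n₂) (Fin n₂) ℝ))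
        * (Ue : Matrix (Fin n₂) (Fin n₂) ℝ) = (lam * lam) • (1 : Matrix (Fin n₂) (Fin n₂) ℝ) := by
      rw [Matrix.mul_smul, Matrix.mul_one, smul_mul_assoc, hUe1']
    rw [this]
    ext j k
    by_cases h : j = k <;>
      simp [h, Matrix.diagonal_apply, Matrix.one_apply, Matrix.sub_apply, Matrix.smul_apply]
  -- eigenvalue bound
  have hevle : ∀ j, eig j ≤ lam * lam := by
    have hD : (Matrix.diagonal (fun j => lam * lam - eig j)).PosSemidef := by
      rw [← hdiagB]
      have := hBpsd.mul_mul_conjTranspose_same (star (Ue : Matrix (Fin n₂) (Fin n₂) ℝ))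
      simpa [Matrix.star_eq_conjTranspose] using this
    intro j
    have := Matrix.posSemidef_diagonal_iff.mp hD j
    linarith
  have hevnn : ∀ j, 0 ≤ eig j := by
    intro j
    have hpsd : (Gᵀ * G).PosSemidef := by
      rw [← conjTranspose_eq_transpose_of_trivial]
      exact Matrix.posSemidef_conjTranspose_mul_self G
    exact hpsd.eigenvalues_nonneg j
  -- rank of B via diagonalization
  have hBdeco : B = (Ue : Matrix (Fin n₂) (Fin n₂) ℝ) *
      Matrix.diagonal (fun j => lam * lam - eig j) * star (Ue : Matrix (Fin n₂) (Fin n₂) ℝ) := by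
    rw [← hdiagB]
    rw [Matrix.mul_assoc, Matrix.mul_assoc, hUe1, Matrix.mul_one, ← Matrix.mul_assoc, hUe1,
      Matrix.one_mul]
  have hUeUnit : IsUnit (Ue : Matrix (Fin n₂) (Fin n₂) ℝ).det :=
    IsUnit.of_mul_eq_one _ (by rw [← Matrix.det_mul, hUe1, Matrix.det_one])
  have hUesUnit : IsUnit (star (Ue : Matrix (Fin n₂) (Fin n₂) ℝ)).det :=
    IsUnit.of_mul_eq_one _ (by rw [← Matrix.det_mul, hUe1', Matrix.det_one])
  have hrankB : B.rank = Fintype.card {j // lam * lam - eig j ≠ 0} := by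
    rw [hBdeco, Matrix.rank_mul_eq_left_of_isUnit_det _ _ hUesUnit,
      Matrix.rank_mul_eq_right_of_isUnit_det _ _ hUeUnit, Matrix.rank_diagonal]
  -- rank of B via the kernel
  have hkerQSQ : LinearMap.ker (Q * S * Q).mulVecLin = LinearMap.ker Q.mulVecLin := by
    ext x
    simp only [LinearMap.mem_ker, Matrix.mulVecLin_apply]
    constructor
    · intro h
      by_contra hq
      have hpos := hWpd.dotProduct_mulVec_pos hq
      have hQx' : x ᵥ* Q = Q *ᵥ x := by
        have h' := Matrix.vecMul_transpose Q x
        rwa [hQsymm] at h'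
      have hdot : dotProduct (Q *ᵥ x) (S *ᵥ (Q *ᵥ x)) = dotProduct x ((Q * S * Q) *ᵥ x) := by
        rw [Matrix.mulVec_mulVec, Matrix.dotProduct_mulVec, Matrix.dotProduct_mulVec,
          ← hQx', Matrix.vecMul_vecMul, Matrix.mul_assoc]
      have hzero : dotProduct (star (Q *ᵥ x)) (S *ᵥ (Q *ᵥ x)) = 0 := by
        rw [star_trivial, hdot, h, dotProduct_zero]
      rw [hzero] at hpos
      exact lt_irrefl 0 hpos
    · intro h
      rw [← Matrix.mulVec_mulVec, ← Matrix.mulVec_mulVec, h, Matrix.mulVec_zero,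
        Matrix.mulVec_zero]
  have hkerQ : LinearMap.ker Q.mulVecLin = LinearMap.range V.mulVecLin := by
    ext x
    simp only [LinearMap.mem_ker, Matrix.mulVecLin_apply, LinearMap.mem_range]
    constructor
    · intro h
      refine ⟨Vᵀ *ᵥ x, ?_⟩
      rw [hQ, Matrix.sub_mulVec, Matrix.one_mulVec] at h
      rw [Matrix.mulVec_mulVec]
      exact (sub_eq_zero.mp h).symm
    · rintro ⟨y, rfl⟩
      rw [Matrix.mulVec_mulVec, hQV, Matrix.zero_mulVec]
  have hrankV : V.rank = rstar := by
    refine le_antisymm ?_ ?_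
    · simpa using V.rank_le_card_width
    · have h1 : (Vᵀ * V).rank = rstar := by
        rw [hV]
        simpa using (Matrix.rank_one (n := Fin rstar) (R := ℝ))
      calc rstar = (Vᵀ * V).rank := h1.symm
        _ ≤ V.rank := Matrix.rank_mul_le_right _ _
  have hrankQ : Q.rank + rstar = n₂ := by
    have h := LinearMap.finrank_range_add_finrank_ker Q.mulVecLin
    rw [hkerQ] at h
    have h2 : Module.finrank ℝ ↥(LinearMap.range V.mulVecLin) = rstar := hrankV
    have h3 : Module.finrank ℝ (Fin n₂ → ℝ) = n₂ := by
      simp [Module.finrank_fintype_fun_eq_card]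
    rw [h2, h3] at h
    rw [Matrix.rank]
    exact h
  have hrankB' : B.rank + rstar = n₂ := by
    have hr1 : B.rank = (Q * S * Q).rank := by
      have hBmul : B = ((lam * lam) • (1 : Matrix (Fin n₂) (Fin n₂) ℝ)) * (Q * S * Q) := by
        rw [hBQSQ, smul_mul_assoc, Matrix.one_mul]
      have hdet : IsUnit ((lam * lam) • (1 : Matrix (Fin n₂) (Fin n₂) ℝ)).det := by
        rw [Matrix.det_smul, Matrix.det_one, mul_one]
        exact (isUnit_iff_ne_zero).mpr (pow_ne_zero _ (by positivity))
      rw [hBmul, Matrix.rank_mul_eq_right_of_isUnit_det _ _ hdet]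
    have hr2' : (Q * S * Q).rank = Q.rank := rank_eq_of_ker_eq _ _ hkerQSQ
    rw [hr1, hr2', hrankQ]
  -- count eigenvalues equal to lam^2
  have hcount : Fintype.card {j // eig j = lam * lam} = rstar := by
    have h1 : Fintype.card {j // lam * lam - eig j ≠ 0}
        = Fintype.card {j // ¬ (eig j = lam * lam)} := by
      apply Fintype.card_congr
      apply Equiv.subtypeEquivRight
      intro j
      rw [sub_ne_zero]
      exact ⟨fun h h' => h h'.symm, fun h h' => h h'.symm⟩
    have h2 := Fintype.card_subtype_compl (fun j : Fin n₂ => eig j = lam * lam)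
    have h3 : Fintype.card {j : Fin n₂ // eig j = lam * lam} ≤ n₂ := by
      simpa using Fintype.card_subtype_le (fun j : Fin n₂ => eig j = lam * lam)
    have h4 : B.rank + rstar = n₂ := hrankB'
    rw [hrankB, h1, h2] at h4
    simp only [Fintype.card_fin] at h4
    omega
  -- singular value facts
  have hle : ∀ i, sg i ≤ lam := by
    intro i
    rw [hsg i]
    calc Real.sqrt (eig (τ i)) ≤ Real.sqrt (lam * lam) := Real.sqrt_le_sqrt (hevle (τ i))
      _ = lam := Real.sqrt_mul_self hlam.le
  have hiff : ∀ i, sg i = lam ↔ eig (τ i) = lam * lam := by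
    intro i
    rw [hsg i]
    constructor
    · intro h
      rw [← Real.mul_self_sqrt (hevnn (τ i)), h]
    · intro h
      rw [h, Real.sqrt_mul_self hlam.le]
  set T : Finset (Fin n₂) := Finset.univ.filter (fun i => sg i = lam) with hT
  have hTcard : T.card = rstar := by
    rw [hT, ← Fintype.card_subtype]
    rw [← hcount]
    apply Fintype.card_congr
    exact (Equiv.subtypeEquivRight fun i => hiff i).trans
      (τ.subtypeEquiv fun i => Iff.rfl)
  have hdc : ∀ i j : Fin n₂, i ≤ j → sg j = lam → sg i = lam := by
    intro i j hij h
    exact le_antisymm (hle i) (h ▸ hsort i j hij)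
  have claim1 : ∀ i : Fin n₂, (i : ℕ) < rstar → sg i = lam := by
    intro i hi
    by_contra hne
    have hsub : T ⊆ Finset.Iio i := by
      intro j hj
      rw [Finset.mem_Iio]
      by_contra hj'
      push_neg at hj'
      exact hne (hdc i j hj' (Finset.mem_filter.mp hj).2)
    have := Finset.card_le_card hsub
    rw [hTcard, Fin.card_Iio] at this
    omega
  have claim2 : sg ⟨rstar, hr2⟩ < lam := by
    refine lt_of_le_of_ne (hle _) ?_
    intro h
    have hsub : Finset.Iic (⟨rstar, hr2⟩ : Fin n₂) ⊆ T := by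
      intro j hj
      rw [hT, Finset.mem_filter]
      exact ⟨Finset.mem_univ _, hdc j ⟨rstar, hr2⟩ (Finset.mem_Iic.mp hj) h⟩
    have hcard := Finset.card_le_card hsub
    rw [hTcard, Fin.card_Iic] at hcard
    simp only [Fin.val_mk] at hcard
    omega
  have hsg0 : sg ⟨0, by omega⟩ = lam := claim1 _ (by simpa using h0)
  refine ⟨?_, ?_, ?_⟩
  · intro i hi
    rw [claim1 i hi, hsg0]
  · -- trace computation
    have htr : Gᵀ * Xs = -(lam • ((V * Uᵀ + Wᵀ) * (U * Matrix.diagonal d * Vᵀ))) := by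
      have h1 : Gᵀ = -(lam • (V * Uᵀ + Wᵀ)) := by
        rw [hGeq]
        simp [transpose_add, transpose_mul, transpose_smul]
      rw [h1, hXs, Matrix.neg_mul, Matrix.smul_mul]
    have hmul : (V * Uᵀ + Wᵀ) * (U * Matrix.diagonal d * Vᵀ)
        = V * (Matrix.diagonal d * Vᵀ) := by
      rw [Matrix.add_mul]
      have e1 : V * Uᵀ * (U * Matrix.diagonal d * Vᵀ) = V * (Matrix.diagonal d * Vᵀ) := by
        rw [Matrix.mul_assoc U, ← Matrix.mul_assoc (V * Uᵀ), Matrix.mul_assoc V, hU,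
          Matrix.mul_one]
      have e2 : Wᵀ * (U * Matrix.diagonal d * Vᵀ) = 0 := by
        rw [Matrix.mul_assoc U, ← Matrix.mul_assoc, hWU, Matrix.zero_mul]
      rw [e1, e2, add_zero]
    have htrace : (V * (Matrix.diagonal d * Vᵀ)).trace = 1 := by
      rw [Matrix.trace_mul_comm, Matrix.mul_assoc, hV, Matrix.mul_one, Matrix.trace_diagonal,
        hnuc]
    rw [htr, hmul, Matrix.trace_neg, Matrix.trace_smul, htrace, hsg0]
    simp
  · have h1 : sg ⟨rstar - 1, by omega⟩ = lam := claim1 _ (by simp; omega)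
    rw [h1]
    linarith [claim2]
end

section
/- If X̃ = (1/2)[[X₁, X],[Xᵀ, X₂]] ∈ S^{n₁+n₂} is positive semidefinite with tr X̃ = 1 (where X₁ ∈ S^{n₁}, X₂ ∈ S^{n₂}, X ∈ R^{n₁×n₂}), then the nuclear norm of the off-diagonal block satisfies ‖X‖_nuc ≤ 1. -/
open Matrix

/-- Nuclear norm of a real matrix: the sum of its singular values
(`√` of the eigenvalues of `Aᵀ A`). -/
noncomputable def nuclearNorm {m n : ℕ} (A : Matrix (Fin m) (Fin n) ℝ) : ℝ :=
  ∑ i, Real.sqrt ((Matrix.isHermitian_conjTranspose_mul_self A).eigenvalues i)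


-- trace of product of PSD matrices is nonneg
lemma trace_mul_psd_nonneg {n : ℕ} {A B : Matrix (Fin n) (Fin n) ℝ}
    (hA : A.PosSemidef) (hB : B.PosSemidef) : 0 ≤ (A * B).trace := by
  obtain ⟨C, hC⟩ := (by open scoped MatrixOrder in exact CStarAlgebra.nonneg_iff_eq_star_mul_self.mp hA.nonneg :
    ∃ C : Matrix (Fin n) (Fin n) ℝ, A = star C * C)
  subst hC
  rw [star_eq_conjTranspose]
  rw [Matrix.mul_assoc, Matrix.trace_mul_comm]
  have h : ((C * B) * Cᴴ).PosSemidef := by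
    simpa [Matrix.mul_assoc] using hB.mul_mul_conjTranspose_same C
  rw [Matrix.trace]
  apply Finset.sum_nonneg
  intro i _
  simpa using h.dotProduct_mulVec_nonneg (Pi.single i 1) |>.trans_eq (by
    simp [mulVec_single, dotProduct, Pi.single_apply, Finset.sum_ite_eq, diag] )

section
variable {n₁ n₂ : ℕ} (X : Matrix (Fin n₁) (Fin n₂) ℝ)

noncomputable def lam (i : Fin n₂) : ℝ := (Matrix.isHermitian_conjTranspose_mul_self X).eigenvalues i
noncomputable def vv (i : Fin n₂) : Fin n₂ → ℝ := ⇑((Matrix.isHermitian_conjTranspose_mul_self X).eigenvectorBasis i)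

lemma lam_nonneg (i : Fin n₂) : 0 ≤ lam X i := by
  have h : (Xᵀ * X).PosSemidef := by
    have := Matrix.posSemidef_conjTranspose_mul_self X
    simpa [Matrix.conjTranspose_eq_transpose_of_trivial] using this
  exact h.eigenvalues_nonneg i

lemma vv_eig (i : Fin n₂) : (Xᵀ * X) *ᵥ vv X i = lam X i • vv X i :=
  (Matrix.isHermitian_conjTranspose_mul_self X).mulVec_eigenvectorBasis i

lemma vv_dot (i j : Fin n₂) : vv X i ⬝ᵥ vv X j = if i = j then 1 else 0 := by
  have h := (Matrix.isHermitian_conjTranspose_mul_self X).eigenvectorBasis.orthonormal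
  rw [orthonormal_iff_ite] at h
  have := h i j
  rwa [EuclideanSpace.inner_eq_star_dotProduct, star_trivial, dotProduct_comm] at this

lemma Xv_dot (i j : Fin n₂) :
    (X *ᵥ vv X i) ⬝ᵥ (X *ᵥ vv X j) = if i = j then lam X j else 0 := by
  have : (X *ᵥ vv X i) ⬝ᵥ (X *ᵥ vv X j) = vv X i ⬝ᵥ ((Xᵀ * X) *ᵥ vv X j) := by
    rw [← mulVec_mulVec, dotProduct_mulVec (vv X i), vecMul_transpose]
  rw [this, vv_eig, dotProduct_smul, smul_eq_mul, vv_dot]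
  split <;> simp [mul_comm]

noncomputable def uu (i : Fin n₂) : Fin n₁ → ℝ :=
  if lam X i = 0 then 0 else (Real.sqrt (lam X i))⁻¹ • (X *ᵥ vv X i)

lemma uu_dot_Xv (i : Fin n₂) : uu X i ⬝ᵥ (X *ᵥ vv X i) = Real.sqrt (lam X i) := by
  unfold uu
  split
  · next h => simp [h]
  · next h =>
    rw [smul_dotProduct, Xv_dot, if_pos rfl, smul_eq_mul]
    have hs : Real.sqrt (lam X i) ≠ 0 :=
      Real.sqrt_ne_zero'.mpr (lt_of_le_of_ne (lam_nonneg X i) (Ne.symm h))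
    rw [inv_mul_eq_div, div_eq_iff hs]
    exact (Real.mul_self_sqrt (lam_nonneg X i)).symm
lemma uu_dot (i j : Fin n₂) :
    uu X i ⬝ᵥ uu X j = if i = j ∧ lam X i ≠ 0 then 1 else 0 := by
  unfold uu
  rcases eq_or_ne (lam X i) 0 with hi | hi
  · simp [hi]
  rcases eq_or_ne (lam X j) 0 with hj | hj
  · have : i ≠ j := fun h => hi (h ▸ hj)
    simp [hi, hj, this]
  rw [if_neg hi, if_neg hj, smul_dotProduct, dotProduct_smul, Xv_dot]
  rcases eq_or_ne i j with rfl | hij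
  · have hs : Real.sqrt (lam X i) ≠ 0 :=
      Real.sqrt_ne_zero'.mpr (lt_of_le_of_ne (lam_nonneg X i) (Ne.symm hi))
    rw [if_pos rfl, if_pos ⟨rfl, hi⟩, smul_eq_mul, smul_eq_mul,
      ← Real.mul_self_sqrt (lam_nonneg X i)]
    field_simp
    rw [Real.sqrt_sq (Real.sqrt_nonneg _)]
  · simp [hij]
end

section
variable {n₁ n₂ : ℕ} (X : Matrix (Fin n₁) (Fin n₂) ℝ)

noncomputable def Vm : Matrix (Fin n₂) (Fin n₂) ℝ := Matrix.of fun k i => vv X i k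
noncomputable def Um : Matrix (Fin n₁) (Fin n₂) ℝ := Matrix.of fun k i => uu X i k

lemma quad_eq_trace_V (B : Matrix (Fin n₂) (Fin n₂) ℝ) :
    ∑ i, vv X i ⬝ᵥ B *ᵥ vv X i = ((Vm X)ᵀ * B * Vm X).trace := by
  rw [Matrix.trace]
  congr 1; ext i
  simp [Matrix.mul_apply, diag, dotProduct, mulVec, Vm, Finset.mul_sum, mul_assoc]
  rw [Finset.sum_comm]
  simp_rw [Finset.sum_mul, mul_assoc]

lemma quad_eq_trace_U (B : Matrix (Fin n₁) (Fin n₁) ℝ) :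
    ∑ i, uu X i ⬝ᵥ B *ᵥ uu X i = ((Um X)ᵀ * B * Um X).trace := by
  rw [Matrix.trace]
  congr 1; ext i
  simp [Matrix.mul_apply, diag, dotProduct, mulVec, Um, Finset.mul_sum, mul_assoc]
  rw [Finset.sum_comm]
  simp_rw [Finset.sum_mul, mul_assoc]

lemma Vm_mul_transpose : Vm X * (Vm X)ᵀ = 1 := by
  rw [mul_eq_one_comm]
  ext i j
  have := vv_dot X i j
  simp only [Matrix.mul_apply, transpose_apply, Vm, Matrix.of_apply, Matrix.one_apply]
  simpa [dotProduct] using this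

lemma sum_vv_quad (B : Matrix (Fin n₂) (Fin n₂) ℝ) :
    ∑ i, vv X i ⬝ᵥ B *ᵥ vv X i = B.trace := by
  rw [quad_eq_trace_V, Matrix.trace_mul_cycle, Vm_mul_transpose, Matrix.one_mul]

lemma Um_transpose_mul : (Um X)ᵀ * Um X =
    Matrix.diagonal (fun i => if lam X i = 0 then (0:ℝ) else 1) := by
  ext i j
  have := uu_dot X i j
  simp only [Matrix.mul_apply, transpose_apply, Um, Matrix.of_apply, Matrix.diagonal_apply]
  rw [show ∑ k, uu X i k * uu X j k = uu X i ⬝ᵥ uu X j from rfl, this]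
  rcases eq_or_ne i j with rfl | hij
  · simp
  · simp [hij]

lemma Um_proj : (Um X * (Um X)ᵀ) * (Um X * (Um X)ᵀ) = Um X * (Um X)ᵀ := by
  have hUD : Um X * Matrix.diagonal (fun i => if lam X i = 0 then (0:ℝ) else 1) = Um X := by
    ext k i
    rw [Matrix.mul_apply]
    rcases eq_or_ne (lam X i) 0 with hi | hi
    · simp [Matrix.diagonal_apply, Finset.sum_ite_eq, hi, Um, uu]
    · simp [Matrix.diagonal_apply, Finset.sum_ite_eq, hi]
  calc (Um X * (Um X)ᵀ) * (Um X * (Um X)ᵀ)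
      = (Um X * ((Um X)ᵀ * Um X)) * (Um X)ᵀ := by simp only [Matrix.mul_assoc]
    _ = Um X * (Um X)ᵀ := by rw [Um_transpose_mul, hUD]

lemma one_sub_proj_psd : (1 - Um X * (Um X)ᵀ).PosSemidef := by
  set P := Um X * (Um X)ᵀ with hP
  have hPP : P * P = P := Um_proj X
  have hPt : Pᵀ = P := by rw [hP, Matrix.transpose_mul, Matrix.transpose_transpose]
  refine .of_dotProduct_mulVec_nonneg ?_ ?_
  · show (1 - P)ᴴ = 1 - P
    have : (1 - P)ᴴ = (1 - P)ᵀ := by ext i j; simp [conjTranspose_apply]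
    rw [this, Matrix.transpose_sub, Matrix.transpose_one, hPt]
  · intro x
    have key : x ⬝ᵥ (1 - P) *ᵥ x = (x - P *ᵥ x) ⬝ᵥ (x - P *ᵥ x) := by
      have h1 : (P *ᵥ x) ⬝ᵥ (P *ᵥ x) = x ⬝ᵥ P *ᵥ x := by
        rw [dotProduct_mulVec (P *ᵥ x), ← mulVec_transpose, hPt, mulVec_mulVec, hPP,
          dotProduct_comm]
      have h2 : (P *ᵥ x) ⬝ᵥ x = x ⬝ᵥ P *ᵥ x := by rw [dotProduct_comm]
      simp only [Matrix.sub_mulVec, dotProduct_sub, sub_dotProduct, Matrix.one_mulVec]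
      rw [h1, h2]; ring
    rw [star_trivial, key]
    exact (by simpa using dotProduct_self_star_nonneg (R := ℝ) (x - P *ᵥ x))
end

/-- If `X̃ = (1/2) [[X₁, X], [Xᵀ, X₂]]` is positive semidefinite with trace `1`,
then the off-diagonal block satisfies `‖X‖_nuc ≤ 1`. -/
theorem offdiag_nuclear_le_one {n₁ n₂ : ℕ}
    (X₁ : Matrix (Fin n₁) (Fin n₁) ℝ) (X₂ : Matrix (Fin n₂) (Fin n₂) ℝ)
    (X : Matrix (Fin n₁) (Fin n₂) ℝ)
    (hpsd : (((1 : ℝ) / 2) • Matrix.fromBlocks X₁ X Xᵀ X₂).PosSemidef)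
    (htr : (((1 : ℝ) / 2) • Matrix.fromBlocks X₁ X Xᵀ X₂).trace = 1) :
    nuclearNorm X ≤ 1 := by
  have key : ∀ (y : Fin n₁ → ℝ) (z : Fin n₂ → ℝ),
      2 * (y ⬝ᵥ X *ᵥ z) ≤ y ⬝ᵥ X₁ *ᵥ y + z ⬝ᵥ X₂ *ᵥ z := by
    intro y z
    have h := hpsd.dotProduct_mulVec_nonneg (Sum.elim y (-z))
    simp only [star_trivial, smul_mulVec, dotProduct_smul, fromBlocks_mulVec,
      sumElim_dotProduct_sumElim, mulVec_neg, dotProduct_add, dotProduct_neg,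
      neg_dotProduct, neg_neg, smul_eq_mul, Sum.elim_comp_inl, Sum.elim_comp_inr] at h
    have hz : z ⬝ᵥ Xᵀ *ᵥ y = y ⬝ᵥ X *ᵥ z := by
      rw [dotProduct_mulVec, vecMul_transpose, dotProduct_comm]
    rw [hz] at h
    linarith
  have hMh : ∀ i j, (Matrix.fromBlocks X₁ X Xᵀ X₂) j i = (Matrix.fromBlocks X₁ X Xᵀ X₂) i j := by
    intro i j
    have := congrFun (congrFun hpsd.1 i) j
    simp only [conjTranspose_apply, star_trivial, Matrix.smul_apply, smul_eq_mul] at this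
    linarith
  have hX₁ : X₁.PosSemidef := by
    refine .of_dotProduct_mulVec_nonneg ?_ ?_
    · ext k l
      simpa using hMh (Sum.inl k) (Sum.inl l)
    · intro y
      have h := key y 0
      simpa using h
  have stepA : ∀ i, Real.sqrt (lam X i) ≤
      (uu X i ⬝ᵥ X₁ *ᵥ uu X i + vv X i ⬝ᵥ X₂ *ᵥ vv X i) / 2 := by
    intro i
    have h := key (uu X i) (vv X i)
    rw [uu_dot_Xv] at h
    linarith
  have sumA : nuclearNorm X ≤
      ((∑ i, uu X i ⬝ᵥ X₁ *ᵥ uu X i) + ∑ i, vv X i ⬝ᵥ X₂ *ᵥ vv X i) / 2 := by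
    have : nuclearNorm X = ∑ i, Real.sqrt (lam X i) := rfl
    rw [this, ← Finset.sum_add_distrib, Finset.sum_div]
    exact Finset.sum_le_sum fun i _ => stepA i
  have hB : ∑ i, vv X i ⬝ᵥ X₂ *ᵥ vv X i = X₂.trace := sum_vv_quad X X₂
  have hC : ∑ i, uu X i ⬝ᵥ X₁ *ᵥ uu X i ≤ X₁.trace := by
    rw [quad_eq_trace_U, Matrix.trace_mul_cycle, ← Matrix.trace_mul_comm]
    have h2 : 0 ≤ (X₁ * (1 - Um X * (Um X)ᵀ)).trace :=
      trace_mul_psd_nonneg hX₁ (one_sub_proj_psd X)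
    rw [Matrix.mul_sub, Matrix.mul_one, Matrix.trace_sub] at h2
    linarith
  have htr2 : X₁.trace + X₂.trace = 2 := by
    rw [Matrix.trace_smul, smul_eq_mul] at htr
    have hMt : (Matrix.fromBlocks X₁ X Xᵀ X₂).trace = X₁.trace + X₂.trace := by
      simp [Matrix.trace, Matrix.diag, Fintype.sum_sum_type]
    rw [hMt] at htr
    linarith
  linarith
end

section
/- Let h_{t+1} ≤ (1 − ξ + ξ²L/γ)·h_t + (ξ²L − ξδ/6)·c for some c ≥ 0 and all ξ ∈ [0,1], with L, γ, δ > 0. Then choosing ξ = min{γ/(2L), δ/(6L)} yields h_{t+1} ≤ (1 − min{γ/(4L), δ/(12L)})·h_t. -/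
/-- The recursion step yielding the linear rate: if
`h_{t+1} ≤ (1 − ξ + ξ²L/γ) h_t + (ξ²L − ξδ/6) c` for all `ξ ∈ [0,1]`, with
`c ≥ 0`, `h_t ≥ 0`, `0 < γ ≤ L` and `δ > 0`, then
`h_{t+1} ≤ (1 − min{γ/(4L), δ/(12L)}) h_t`. -/
theorem linear_rate_recursion (ht ht1 c L γ δ : ℝ)
    (hc : 0 ≤ c) (hht : 0 ≤ ht) (hL : 0 < L) (hγ : 0 < γ) (hδ : 0 < δ)
    (hγL : γ ≤ L)
    (hrec : ∀ ξ ∈ Set.Icc (0 : ℝ) 1,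
      ht1 ≤ (1 - ξ + ξ ^ 2 * L / γ) * ht + (ξ ^ 2 * L - ξ * δ / 6) * c) :
    ht1 ≤ (1 - min (γ / (4 * L)) (δ / (12 * L))) * ht := by
  rcases le_or_gt (γ / (2 * L)) (δ / (6 * L)) with h | h
  · -- min = γ/(4L); take ξ = γ/(2L), and 3γ ≤ δ
    have h3 : 3 * γ ≤ δ := by
      have := (div_le_div_iff₀ (by positivity) (by positivity)).mp h
      nlinarith
    have hmin : min (γ / (4 * L)) (δ / (12 * L)) = γ / (4 * L) := by
      apply min_eq_left
      rw [div_le_div_iff₀ (by positivity) (by positivity)]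
      nlinarith
    set ξ := γ / (2 * L) with hξ
    have hξ0 : 0 ≤ ξ := by positivity
    have hξ1 : ξ ≤ 1 := by
      rw [hξ, div_le_one (by positivity)]; linarith
    have key := hrec ξ ⟨hξ0, hξ1⟩
    rw [hmin]
    have e1 : 1 - ξ + ξ ^ 2 * L / γ = 1 - γ / (4 * L) := by
      rw [hξ]; field_simp; ring
    have e2 : ξ ^ 2 * L - ξ * δ / 6 ≤ 0 := by
      have heq : ξ ^ 2 * L - ξ * δ / 6 = γ * (3 * γ - δ) / (12 * L) := by
        rw [hξ]; field_simp; ring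
      rw [heq]
      apply div_nonpos_of_nonpos_of_nonneg _ (by positivity)
      nlinarith
    calc ht1 ≤ (1 - ξ + ξ ^ 2 * L / γ) * ht + (ξ ^ 2 * L - ξ * δ / 6) * c := key
      _ ≤ (1 - γ / (4 * L)) * ht + 0 := by
          rw [e1]; gcongr ?_ + ?_; · rfl
          exact mul_nonpos_of_nonpos_of_nonneg e2 hc
      _ = (1 - γ / (4 * L)) * ht := by ring
  · -- min = δ/(12L); take ξ = δ/(6L), δ < 3γ
    have h3 : δ < 3 * γ := by
      have := (div_lt_div_iff₀ (by positivity) (by positivity)).mp h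
      nlinarith
    have hmin : min (γ / (4 * L)) (δ / (12 * L)) = δ / (12 * L) := by
      apply min_eq_right
      rw [div_le_div_iff₀ (by positivity) (by positivity)]
      nlinarith
    set ξ := δ / (6 * L) with hξ
    have hξ0 : 0 ≤ ξ := by positivity
    have hξ1 : ξ ≤ 1 := by
      rw [hξ, div_le_one (by positivity)]; linarith
    have key := hrec ξ ⟨hξ0, hξ1⟩
    rw [hmin]
    have e2 : ξ ^ 2 * L - ξ * δ / 6 = 0 := by
      rw [hξ]; field_simp; ring
    have e1 : 1 - ξ + ξ ^ 2 * L / γ ≤ 1 - δ / (12 * L) := by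
      rw [hξ]
      have hd : (δ / (6 * L)) ^ 2 * L / γ ≤ δ / (12 * L) := by
        rw [div_le_div_iff₀ (by positivity) (by positivity), div_pow]
        rw [div_mul_eq_mul_div, div_mul_eq_mul_div, div_le_iff₀ (by positivity)]
        nlinarith [mul_nonneg (mul_nonneg hδ.le (by linarith : (0:ℝ) ≤ 3 * γ - δ)) (mul_pos hL hL).le]
      have heq : δ / (6 * L) - δ / (12 * L) = δ / (12 * L) := by
        field_simp; ring
      linarith
    calc ht1 ≤ (1 - ξ + ξ ^ 2 * L / γ) * ht + (ξ ^ 2 * L - ξ * δ / 6) * c := key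
      _ = (1 - ξ + ξ ^ 2 * L / γ) * ht := by rw [e2]; ring
      _ ≤ (1 - δ / (12 * L)) * ht := mul_le_mul_of_nonneg_right e1 hht
end
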